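/- arXiv:1704.01777 — 4 statements merged into one kernel-verified Lean document; each statement's English description precedes it below -/
import Mathlib

section
/- Suppose r = n − 1 and n − 1 ≤ m_1. Then S \ P_{n−1} = {a_{n−1} + μ·a_n + λ·a_{n+1} : μ, λ ∈ ℕ and (μ ≤ q − 1 + ε or λ ≤ d − 1)}, where ε = 1 if l = n − 1 and ε = 0 otherwise. -/
private lemma mem_closure_image_iff {ι M : Type*} [AddCommMonoid M] {f : ι → M} {T : Set ι} {x : M} :
    x ∈ AddSubmonoid.closure (f '' T) ↔
      ∃ c : Multiset ι, (∀ i ∈ c, i ∈ T) ∧ (c.map f).sum = x := by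
  constructor
  · intro hx
    induction hx using AddSubmonoid.closure_induction with
    | mem y hy =>
      obtain ⟨i, hi, rfl⟩ := hy
      exact ⟨{i}, by simpa using hi, by simp⟩
    | zero => exact ⟨0, by simp, by simp⟩
    | add y z _ _ hy hz =>
      obtain ⟨c1, h1, e1⟩ := hy
      obtain ⟨c2, h2, e2⟩ := hz
      refine ⟨c1 + c2, ?_, by simp [e1, e2]⟩
      intro i hi
      rcases Multiset.mem_add.1 hi with h | h
      exacts [h1 i h, h2 i h]
  · rintro ⟨c, hc, rfl⟩
    refine AddSubmonoid.multiset_sum_mem _ _ ?_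
    intro y hy
    obtain ⟨i, hi, rfl⟩ := Multiset.mem_map.1 hy
    exact AddSubmonoid.subset_closure ⟨i, hc i hi, rfl⟩

section
variable {n m₁ d : ℕ} {a : ℕ → ℕ × ℕ}

private lemma sum_nn1 (c : Multiset ℕ) (hc : ∀ i ∈ c, i = n ∨ i = n + 1) :
    ∃ μ lam : ℕ, (c.map a).sum = μ • a n + lam • a (n + 1) := by
  induction c using Multiset.induction_on with
  | empty => exact ⟨0, 0, by simp⟩
  | cons i c ih =>
    obtain ⟨μ, lam, e⟩ := ih fun j hj => hc j (Multiset.mem_cons_of_mem hj)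
    rcases hc i (Multiset.mem_cons_self i c) with rfl | rfl
    · exact ⟨μ + 1, lam, by simp [e, succ_nsmul]; ring⟩
    · exact ⟨μ, lam + 1, by simp [e, succ_nsmul]; ring⟩

private lemma exchange (ha1 : ∀ i, 1 ≤ i → i ≤ n → a i = (m₁ + (i - 1) * d, (n - i) * d))
    {i j i' j' : ℕ} (hi : 1 ≤ i) (hi' : i ≤ n) (hj : 1 ≤ j) (hj' : j ≤ n)
    (hk : 1 ≤ i') (hk' : i' ≤ n) (hl : 1 ≤ j') (hl' : j' ≤ n)
    (hsum : i + j = i' + j') : a i + a j = a i' + a j' := by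
  rw [ha1 i hi hi', ha1 j hj hj', ha1 i' hk hk', ha1 j' hl hl']
  have e1 : (i - 1) * d + (j - 1) * d = (i' - 1) * d + (j' - 1) * d := by
    rw [← Nat.add_mul, ← Nat.add_mul]; congr 1; omega
  have e2 : (n - i) * d + (n - j) * d = (n - i') * d + (n - j') * d := by
    rw [← Nat.add_mul, ← Nat.add_mul]; congr 1; omega
  rw [Prod.mk_add_mk, Prod.mk_add_mk, Prod.mk.injEq]
  constructor <;> omega

private lemma structure_lemma (hn : 4 ≤ n)
    (ha1 : ∀ i, 1 ≤ i → i ≤ n → a i = (m₁ + (i - 1) * d, (n - i) * d)) :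
    ∀ k (c : Multiset ℕ), c.count (n - 1) = k → (∀ i ∈ c, i ∈ Set.Icc 1 (n + 1)) →
      (c.map a).sum ∈ AddSubmonoid.closure (a '' (Set.Icc 1 (n + 1) \ {n - 1})) ∨
      ∃ μ lam : ℕ, (c.map a).sum = a (n - 1) + μ • a n + lam • a (n + 1) := by
  intro k
  induction k using Nat.strong_induction_on with
  | _ k IH =>
  intro c hk hc
  rcases Nat.eq_zero_or_pos k with rfl | hkpos
  · left
    refine AddSubmonoid.multiset_sum_mem _ _ ?_
    intro y hy
    obtain ⟨i, hi, rfl⟩ := Multiset.mem_map.1 hy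
    refine AddSubmonoid.subset_closure ⟨i, ⟨hc i hi, ?_⟩, rfl⟩
    intro h
    rw [Set.mem_singleton_iff] at h
    subst h
    have := Multiset.count_pos.2 hi
    omega
  · -- k ≥ 1 : n-1 ∈ c
    have hmem : (n - 1) ∈ c := by
      rw [← Multiset.count_pos, hk]; omega
    obtain ⟨c', rfl⟩ := Multiset.exists_cons_of_mem hmem
    by_cases hall : ∀ i ∈ c', i = n ∨ i = n + 1
    · right
      obtain ⟨μ, lam, e⟩ := sum_nn1 (a := a) c' hall
      exact ⟨μ, lam, by simp [e, add_assoc]⟩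
    · push_neg at hall
      obtain ⟨i, hi, hin, hin1⟩ := hall
      obtain ⟨c'', rfl⟩ := Multiset.exists_cons_of_mem hi
      have hiIcc := hc i (by simp)
      simp only [Set.mem_Icc] at hiIcc
      have hsum0 : (((n - 1) ::ₘ i ::ₘ c'').map a).sum
          = a (n - 1) + a i + (c''.map a).sum := by
        simp [add_assoc]
      by_cases hi1 : i = n - 1
      · -- two copies of n-1 : exchange to (n-2, n)
        subst hi1
        have hex : a (n - 1) + a (n - 1) = a (n - 2) + a n :=
          exchange ha1 (by omega) (by omega) (by omega) (by omega)
            (by omega) (by omega) (by omega) le_rfl (by omega)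
        have hs2 : (((n - 1) ::ₘ (n - 1) ::ₘ c'').map a).sum
            = (((n - 2) ::ₘ n ::ₘ c'').map a).sum := by
          simp only [Multiset.map_cons, Multiset.sum_cons, ← add_assoc, hex]
        rw [hs2]
        refine IH (k - 2) (by omega) _ ?_ ?_
        · have := hk
          simp only [Multiset.count_cons] at this ⊢
          split_ifs at this ⊢ <;> omega
        · intro j hj
          simp only [Multiset.mem_cons] at hj
          rcases hj with rfl | rfl | hj
          · simp only [Set.mem_Icc]; omega
          · simp only [Set.mem_Icc]; omega
          · exact hc j (by simp [hj])
      · -- i ≤ n-2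
        have hile : i ≤ n - 2 ∧ 1 ≤ i := by
          constructor
          · rcases hiIcc with ⟨h1, h2⟩
            omega
          · exact hiIcc.1
        by_cases hione : i = 1
        · subst hione
          have hex : a (n - 1) + a 1 = a 2 + a (n - 2) :=
            exchange ha1 (by omega) (by omega) le_rfl (by omega)
              (by omega) (by omega) (by omega) (by omega) (by omega)
        
          have hs2 : (((n - 1) ::ₘ 1 ::ₘ c'').map a).sum
              = ((2 ::ₘ (n - 2) ::ₘ c'').map a).sum := by
            simp only [Multiset.map_cons, Multiset.sum_cons, ← add_assoc, hex]
          rw [hs2]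
          refine IH (k - 1) (by omega) _ ?_ ?_
          · have := hk
            simp only [Multiset.count_cons] at this ⊢
            split_ifs at this ⊢ <;> omega
          · intro j hj
            simp only [Multiset.mem_cons] at hj
            rcases hj with rfl | rfl | hj
            · simp only [Set.mem_Icc]; omega
            · simp only [Set.mem_Icc]; omega
            · exact hc j (by simp [hj])
        · have hex : a (n - 1) + a i = a (i - 1) + a n :=
            exchange ha1 (by omega) (by omega) (by omega) (by omega)
              (by omega) (by omega) (by omega) le_rfl (by omega)
          have hs2 : (((n - 1) ::ₘ i ::ₘ c'').map a).sum
              = (((i - 1) ::ₘ n ::ₘ c'').map a).sum := by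
            simp only [Multiset.map_cons, Multiset.sum_cons, ← add_assoc, hex]
          rw [hs2]
          refine IH (k - 1) (by omega) _ ?_ ?_
          · have := hk
            simp only [Multiset.count_cons] at this ⊢
            split_ifs at this ⊢ <;> omega
          · intro j hj
            simp only [Multiset.mem_cons] at hj
            rcases hj with rfl | rfl | hj
            · simp only [Set.mem_Icc]; omega
            · simp only [Set.mem_Icc]; omega
            · exact hc j (by simp [hj])

private lemma sum_coords (ha1 : ∀ i, 1 ≤ i → i ≤ n → a i = (m₁ + (i - 1) * d, (n - i) * d))
    (c : Multiset ℕ) (h : ∀ i ∈ c, 1 ≤ i ∧ i ≤ n) :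
    (c.map a).sum = (c.card * m₁ + (c.map (fun i => i - 1)).sum * d,
      (c.map (fun i => n - i)).sum * d) := by
  induction c using Multiset.induction_on with
  | empty => simp; rfl
  | cons i c ih =>
    have hi := h i (Multiset.mem_cons_self i c)
    rw [Multiset.map_cons, Multiset.sum_cons,
      ih fun j hj => h j (Multiset.mem_cons_of_mem hj), ha1 i hi.1 hi.2]
    simp only [Multiset.map_cons, Multiset.sum_cons, Multiset.card_cons,
      Prod.mk_add_mk, Prod.mk.injEq]
    constructor <;> ring

private lemma sum_AD (c : Multiset ℕ) (h : ∀ i ∈ c, 1 ≤ i ∧ i ≤ n) :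
    (c.map (fun i => i - 1)).sum + (c.map (fun i => n - i)).sum = c.card * (n - 1) := by
  induction c using Multiset.induction_on with
  | empty => simp
  | cons i c ih =>
    have hi := h i (Multiset.mem_cons_self i c)
    have ih' := ih fun j hj => h j (Multiset.mem_cons_of_mem hj)
    simp only [Multiset.map_cons, Multiset.sum_cons, Multiset.card_cons]
    have : (c.card + 1) * (n - 1) = c.card * (n - 1) + (n - 1) := by ring
    omega

private lemma sum_ne_one (c : Multiset ℕ) (h : ∀ x ∈ c, x ≠ 1) : c.sum ≠ 1 := by
  induction c using Multiset.induction_on with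
  | empty => simp
  | cons i c ih =>
    have hi := h i (Multiset.mem_cons_self i c)
    have ih' := ih fun j hj => h j (Multiset.mem_cons_of_mem hj)
    simp only [Multiset.sum_cons]
    omega

private lemma analysis (hn : 4 ≤ n) (hm₁ : 0 < m₁) (hd : 0 < d) (hgcd : Nat.gcd m₁ d = 1)
    (ha1 : ∀ i, 1 ≤ i → i ≤ n → a i = (m₁ + (i - 1) * d, (n - i) * d))
    (ha2 : a (n + 1) = (0, m₁ + (n - 1) * d)) {μ lam : ℕ}
    (hmem : a (n - 1) + μ • a n + lam • a (n + 1) ∈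
      AddSubmonoid.closure (a '' (Set.Icc 1 (n + 1) \ {n - 1}))) :
    m₁ ≤ μ * (n - 1) + (n - 2) ∧ d ≤ lam := by
  classical
  have han1 : a (n - 1) = (m₁ + (n - 2) * d, d) := by
    rw [ha1 (n - 1) (by omega) (by omega)]
    have h1 : n - 1 - 1 = n - 2 := by omega
    have h2 : n - (n - 1) = 1 := by omega
    rw [h1, h2, one_mul]
  have han : a n = (m₁ + (n - 1) * d, 0) := by
    rw [ha1 n (by omega) le_rfl]
    have h2 : n - n = 0 := by omega
    rw [h2, zero_mul]
  obtain ⟨c, hc, hsum⟩ := mem_closure_image_iff.1 hmem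
  -- split off the copies of n+1
  set c₀ : Multiset ℕ := c.filter (fun i => ¬ i = n + 1) with hc₀
  set s : ℕ := c.count (n + 1) with hs
  have hsplit : c.filter (fun i => i = n + 1) + c₀ = c := Multiset.filter_add_not _ c
  have hrep : c.filter (fun i => i = n + 1) = Multiset.replicate s (n + 1) := by
    rw [hs, ← Multiset.filter_eq]
    congr 1
    ext i
    simp [eq_comm]
  have hc₀mem : ∀ i ∈ c₀, (1 ≤ i ∧ i ≤ n) ∧ i ≠ n - 1 := by
    intro i hi
    have h1 := Multiset.mem_filter.1 hi
    have h2 := hc i h1.1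
    obtain ⟨hIcc, hne⟩ := h2
    simp only [Set.mem_Icc] at hIcc
    have := h1.2
    exact ⟨⟨hIcc.1, by omega⟩, by simpa using hne⟩
  set t : ℕ := c₀.card with ht
  set A : ℕ := (c₀.map (fun i => i - 1)).sum with hA
  set D : ℕ := (c₀.map (fun i => n - i)).sum with hD
  have hsum0 : (c.map a).sum = (t * m₁ + A * d, D * d + s * (m₁ + (n - 1) * d)) := by
    rw [← hsplit, Multiset.map_add, Multiset.sum_add, hrep, Multiset.map_replicate,
      Multiset.sum_replicate, ha2, sum_coords ha1 c₀ (fun i hi => (hc₀mem i hi).1)]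
    simp [Prod.ext_iff, smul_eq_mul, mul_comm, ← hA, ← hD, ← ht]
    try ring
  have hx : a (n - 1) + μ • a n + lam • a (n + 1)
      = (m₁ + (n - 2) * d + μ * (m₁ + (n - 1) * d),
         d + lam * (m₁ + (n - 1) * d)) := by
    rw [han1, han, ha2]
    simp [Prod.ext_iff, smul_eq_mul]
  rw [hsum0, hx, Prod.mk.injEq] at hsum
  obtain ⟨E1, E2⟩ := hsum
  have hAD : A + D = t * (n - 1) := sum_AD c₀ fun i hi => (hc₀mem i hi).1
  have hDne : D ≠ 1 := by
    apply sum_ne_one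
    intro x hx'
    obtain ⟨i, hi, rfl⟩ := Multiset.mem_map.1 hx'
    have := hc₀mem i hi
    omega
  -- expand E1
  have E1' : t * m₁ + A * d = m₁ + (n - 2) * d + μ * m₁ + μ * ((n - 1) * d) := by
    have : μ * (m₁ + (n - 1) * d) = μ * m₁ + μ * ((n - 1) * d) := by ring
    omega
  -- Step 1 : t ≥ μ + 2
  have hstep1 : μ + 2 ≤ t := by
    by_contra hcon
    push_neg at hcon
    rcases Nat.lt_or_ge t (μ + 1) with hlt | hge
    · -- t ≤ μ
      have h1 : t * (n - 1) ≤ μ * (n - 1) := Nat.mul_le_mul_right _ (by omega)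
      have h2 : A ≤ μ * (n - 1) := by omega
      have h3 : A * d ≤ μ * (n - 1) * d := Nat.mul_le_mul_right _ h2
      have h4 : t * m₁ ≤ μ * m₁ := Nat.mul_le_mul_right _ (by omega)
      have h5 : μ * ((n - 1) * d) = μ * (n - 1) * d := by ring
      omega
    · -- t = μ + 1
      have htμ : t = μ + 1 := by omega
      have h6 : t * m₁ = μ * m₁ + m₁ := by rw [htμ]; ring
      have h7 : A * d = ((n - 2) + μ * (n - 1)) * d := by
        have : ((n - 2) + μ * (n - 1)) * d = (n - 2) * d + μ * ((n - 1) * d) := by ring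
        omega
      have h8 : A = (n - 2) + μ * (n - 1) := Nat.eq_of_mul_eq_mul_right hd h7
      have h9 : t * (n - 1) = μ * (n - 1) + (n - 1) := by rw [htμ]; ring
      omega
  -- Step 2
  set u : ℕ := t - μ - 1 with hu
  have hut : t = μ + 1 + u := by omega
  have hu1 : 1 ≤ u := by omega
  set B : ℕ := (n - 2) + μ * (n - 1) with hB
  have key : u * m₁ + A * d = B * d := by
    have h1 : t * m₁ = μ * m₁ + m₁ + u * m₁ := by rw [hut]; ring
    have h2 : B * d = (n - 2) * d + μ * ((n - 1) * d) := by rw [hB]; ring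
    omega
  have hABle : A ≤ B := by
    have : A * d ≤ B * d := by omega
    exact Nat.le_of_mul_le_mul_right this hd
  set C : ℕ := B - A with hCdef
  have hCA : C + A = B := by omega
  have hCd : u * m₁ = C * d := by
    have h1 : B * d = C * d + A * d := by rw [← hCA]; ring
    omega
  have hdvd : d ∣ u := by
    have hco : Nat.Coprime d m₁ := (Nat.coprime_comm.1 hgcd)
    exact hco.dvd_of_dvd_mul_right ⟨C, by rw [hCd]; ring⟩
  have hdu : d ≤ u := Nat.le_of_dvd (by omega) hdvd
  -- m₁ ≤ B
  have hm₁C : m₁ ≤ C := by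
    have h1 : d * m₁ ≤ u * m₁ := Nat.mul_le_mul_right _ hdu
    have h2 : d * m₁ ≤ d * C := by
      have : C * d = d * C := by ring
      omega
    exact Nat.le_of_mul_le_mul_left h2 hd
  have goal1 : m₁ ≤ μ * (n - 1) + (n - 2) := by omega
  -- cardinality identity
  have hADd : A * d + D * d = t * ((n - 1) * d) := by
    have h1 : (A + D) * d = A * d + D * d := by ring
    have h2 : (A + D) * d = t * ((n - 1) * d) := by rw [hAD]; ring
    omega
  have hfin : (t + s) * (m₁ + (n - 1) * d) = (μ + 1 + lam) * (m₁ + (n - 1) * d) := by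
    have ex1 : (t + s) * (m₁ + (n - 1) * d)
        = t * m₁ + t * ((n - 1) * d) + s * (m₁ + (n - 1) * d) := by ring
    have ex2 : (μ + 1 + lam) * (m₁ + (n - 1) * d)
        = μ * m₁ + m₁ + μ * ((n - 1) * d) + (n - 1) * d + lam * (m₁ + (n - 1) * d) := by
      ring
    have ex4 : (n - 1) * d = (n - 2) * d + d := by
      have h : n - 2 + 1 = n - 1 := by omega
      calc (n - 1) * d = (n - 2 + 1) * d := by rw [h]
        _ = (n - 2) * d + d := by ring
    omega
  have hts : t + s = μ + 1 + lam :=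
    Nat.eq_of_mul_eq_mul_right (by omega) hfin
  exact ⟨goal1, by omega⟩

private lemma construct (hn : 4 ≤ n) (hd : 0 < d) (hnm : n - 1 ≤ m₁)
    (ha1 : ∀ i, 1 ≤ i → i ≤ n → a i = (m₁ + (i - 1) * d, (n - i) * d))
    (ha2 : a (n + 1) = (0, m₁ + (n - 1) * d)) {μ lam : ℕ}
    (h1 : m₁ ≤ μ * (n - 1) + (n - 2)) (h2 : d ≤ lam) :
    a (n - 1) + μ • a n + lam • a (n + 1) ∈
      AddSubmonoid.closure (a '' (Set.Icc 1 (n + 1) \ {n - 1})) := by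
  have hmemgen : ∀ i, 1 ≤ i → i ≤ n + 1 → i ≠ n - 1 →
      a i ∈ AddSubmonoid.closure (a '' (Set.Icc 1 (n + 1) \ {n - 1})) := by
    intro i hi1 hi2 hi3
    exact AddSubmonoid.subset_closure
      ⟨i, ⟨Set.mem_Icc.2 ⟨hi1, hi2⟩, by simpa using hi3⟩, rfl⟩
  have han1 : a (n - 1) = (m₁ + (n - 2) * d, d) := by
    rw [ha1 (n - 1) (by omega) (by omega)]
    have e1 : n - 1 - 1 = n - 2 := by omega
    have e2 : n - (n - 1) = 1 := by omega
    rw [e1, e2, one_mul]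
  have han : a n = (m₁ + (n - 1) * d, 0) := by
    rw [ha1 n (by omega) le_rfl, Nat.sub_self, zero_mul]
  have ha1' : a 1 = (m₁, (n - 1) * d) := by
    rw [ha1 1 le_rfl (by omega), Nat.sub_self, zero_mul, add_zero]
  -- arithmetic setup
  set A : ℕ := μ * (n - 1) + (n - 2) - m₁ with hAdef
  have hA : A + m₁ = μ * (n - 1) + (n - 2) := by omega
  have hAub : A + 1 ≤ μ * (n - 1) := by omega
  set α : ℕ := A / (n - 1) with hα
  set β : ℕ := A % (n - 1) with hβ
  have hdiv : (n - 1) * α + β = A := Nat.div_add_mod A (n - 1)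
  have hβlt : β < n - 1 := Nat.mod_lt _ (by omega)
  have hαμ : α + 1 ≤ μ := by
    by_contra hcon
    push_neg at hcon
    have h3 : μ * (n - 1) ≤ α * (n - 1) := Nat.mul_le_mul_right _ (by omega)
    have h4 : (n - 1) * α = α * (n - 1) := by ring
    omega
  set δ : ℕ := lam - d with hδdef
  have hδ : δ + d = lam := by omega
  -- common expansion facts
  have e5 : A * d + m₁ * d = μ * ((n - 1) * d) + (n - 2) * d := by
    have : (A + m₁) * d = (μ * (n - 1) + (n - 2)) * d := by rw [hA]
    have h6 : (A + m₁) * d = A * d + m₁ * d := by ring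
    have h7 : (μ * (n - 1) + (n - 2)) * d = μ * ((n - 1) * d) + (n - 2) * d := by ring
    omega
  have e4 : α * ((n - 1) * d) + β * d = A * d := by
    have : ((n - 1) * α + β) * d = A * d := by rw [hdiv]
    have h6 : ((n - 1) * α + β) * d = α * ((n - 1) * d) + β * d := by ring
    omega
  have g3a : lam * m₁ = δ * m₁ + d * m₁ := by
    have : lam * m₁ = (δ + d) * m₁ := by rw [hδ]
    have h6 : (δ + d) * m₁ = δ * m₁ + d * m₁ := by ring
    omega
  have g3b : lam * ((n - 1) * d) = δ * ((n - 1) * d) + d * ((n - 1) * d) := by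
    have : lam * ((n - 1) * d) = (δ + d) * ((n - 1) * d) := by rw [hδ]
    have h6 : (δ + d) * ((n - 1) * d) = δ * ((n - 1) * d) + d * ((n - 1) * d) := by ring
    omega
  have g4 : (n - 1) * d = (n - 2) * d + d := by
    rw [show n - 1 = n - 2 + 1 by omega]; ring
  have g3c : δ * (m₁ + (n - 1) * d) = δ * m₁ + δ * ((n - 1) * d) := by ring
  have g3d : lam * (m₁ + (n - 1) * d) = lam * m₁ + lam * ((n - 1) * d) := by ring
  rcases Nat.lt_or_ge β (n - 2) with hcase | hcase
  · -- β ≤ n - 3 : use indices 1, β+1, n, n+1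
    set γ : ℕ := μ + d - α with hγdef
    have hγ : γ + α = μ + d := by omega
    have haβ : a (β + 1) = (m₁ + β * d, (n - 1 - β) * d) := by
      rw [ha1 (β + 1) (by omega) (by omega)]
      have e1 : β + 1 - 1 = β := by omega
      have e2 : n - (β + 1) = n - 1 - β := by omega
      rw [e1, e2]
    have heq : a (n - 1) + μ • a n + lam • a (n + 1)
        = γ • a 1 + a (β + 1) + α • a n + δ • a (n + 1) := by
      rw [han1, han, ha2, ha1', haβ]
      simp only [Prod.smul_mk, smul_eq_mul, Prod.mk_add_mk, Prod.mk.injEq,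
        Nat.mul_zero, Nat.zero_add, Nat.add_zero, Nat.mul_add]
      constructor
      · have e1 : γ * m₁ + α * m₁ = μ * m₁ + d * m₁ := by
          have : (γ + α) * m₁ = (μ + d) * m₁ := by rw [hγ]
          have h6 : (γ + α) * m₁ = γ * m₁ + α * m₁ := by ring
          have h7 : (μ + d) * m₁ = μ * m₁ + d * m₁ := by ring
          omega
        have e6 : d * m₁ = m₁ * d := by ring
        omega
      · have g1 : γ * ((n - 1) * d) + α * ((n - 1) * d)
            = μ * ((n - 1) * d) + d * ((n - 1) * d) := by
          have : (γ + α) * ((n - 1) * d) = (μ + d) * ((n - 1) * d) := by rw [hγ]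
          have h6 : (γ + α) * ((n - 1) * d) = γ * ((n - 1) * d) + α * ((n - 1) * d) := by
            ring
          have h7 : (μ + d) * ((n - 1) * d) = μ * ((n - 1) * d) + d * ((n - 1) * d) := by
            ring
          omega
        have g2 : (n - 1 - β) * d + β * d = (n - 1) * d := by
          have h6 : (n - 1 - β) + β = n - 1 := by omega
          have h7 : ((n - 1 - β) + β) * d = (n - 1 - β) * d + β * d := by ring
          rw [← h7, h6]
        have e6 : d * m₁ = m₁ * d := by ring
        omega
    rw [heq]
    refine add_mem (add_mem (add_mem ?_ ?_) ?_) ?_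
    · exact AddSubmonoid.nsmul_mem _ (hmemgen 1 le_rfl (by omega) (by omega)) _
    · exact hmemgen (β + 1) (by omega) (by omega) (by omega)
    · exact AddSubmonoid.nsmul_mem _ (hmemgen n (by omega) (by omega) (by omega)) _
    · exact AddSubmonoid.nsmul_mem _ (hmemgen (n + 1) (by omega) le_rfl (by omega)) _
  · -- β = n - 2 : use indices 1, 2, n-2, n, n+1
    have hcase' : β = n - 2 := by omega
    set γ : ℕ := μ + d - 1 - α with hγdef
    have hγ : γ + α + 1 = μ + d := by omega
    have ha2' : a 2 = (m₁ + d, (n - 2) * d) := by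
      rw [ha1 2 (by omega) (by omega)]
      norm_num
    have han2 : a (n - 2) = (m₁ + (n - 3) * d, 2 * d) := by
      rw [ha1 (n - 2) (by omega) (by omega)]
      have e1 : n - 2 - 1 = n - 3 := by omega
      have e2 : n - (n - 2) = 2 := by omega
      rw [e1, e2]
    have heq : a (n - 1) + μ • a n + lam • a (n + 1)
        = γ • a 1 + a 2 + a (n - 2) + α • a n + δ • a (n + 1) := by
      rw [han1, han, ha2, ha1', ha2', han2]
      simp only [Prod.smul_mk, smul_eq_mul, Prod.mk_add_mk, Prod.mk.injEq,
        Nat.mul_zero, Nat.zero_add, Nat.add_zero, Nat.mul_add]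
      have hβd : β * d = (n - 2) * d := by rw [hcase']
      have hsplit : (n - 3) * d + d = (n - 2) * d := by
        rw [show n - 2 = n - 3 + 1 by omega]; ring
      constructor
      · have e1 : γ * m₁ + α * m₁ + m₁ = μ * m₁ + d * m₁ := by
          have : (γ + α + 1) * m₁ = (μ + d) * m₁ := by rw [hγ]
          have h6 : (γ + α + 1) * m₁ = γ * m₁ + α * m₁ + m₁ := by ring
          have h7 : (μ + d) * m₁ = μ * m₁ + d * m₁ := by ring
          omega
        have e6 : d * m₁ = m₁ * d := by ring
        omega
      · have g1 : γ * ((n - 1) * d) + α * ((n - 1) * d) + (n - 1) * d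
            = μ * ((n - 1) * d) + d * ((n - 1) * d) := by
          have : (γ + α + 1) * ((n - 1) * d) = (μ + d) * ((n - 1) * d) := by rw [hγ]
          have h6 : (γ + α + 1) * ((n - 1) * d)
              = γ * ((n - 1) * d) + α * ((n - 1) * d) + (n - 1) * d := by ring
          have h7 : (μ + d) * ((n - 1) * d) = μ * ((n - 1) * d) + d * ((n - 1) * d) := by
            ring
          omega
        have g2 : (n - 2) * d + 2 * d = (n - 1) * d + d := by
          rw [show n - 1 = n - 2 + 1 by omega]; ring
        have e6 : d * m₁ = m₁ * d := by ring
        omega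
    rw [heq]
    refine add_mem (add_mem (add_mem (add_mem ?_ ?_) ?_) ?_) ?_
    · exact AddSubmonoid.nsmul_mem _ (hmemgen 1 le_rfl (by omega) (by omega)) _
    · exact hmemgen 2 (by omega) (by omega) (by omega)
    · exact hmemgen (n - 2) (by omega) (by omega) (by omega)
    · exact AddSubmonoid.nsmul_mem _ (hmemgen n (by omega) (by omega) (by omega)) _
    · exact AddSubmonoid.nsmul_mem _ (hmemgen (n + 1) (by omega) le_rfl (by omega)) _

end

/-- For the projective monomial curve associated to an arithmetic
sequence, if `r = n-1 ≤ m_1`, then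
`S \ P_{n-1} = {a_{n-1} + μ·a_n + λ·a_{n+1} : μ ≤ q-1+ε or λ ≤ d-1}`, where `ε = 1` if
`l = n-1` and `ε = 0` otherwise (written with `μ < q+ε` and `λ < d`). -/
theorem stmt_12 (n m₁ d : ℕ) (hn : 4 ≤ n) (hm₁ : 0 < m₁) (hd : 0 < d)
    (hgcd : Nat.gcd m₁ d = 1) (hnm : n - 1 ≤ m₁)
    (m : ℕ → ℕ) (hm : ∀ i, m i = m₁ + (i - 1) * d)
    (a : ℕ → ℕ × ℕ)
    (ha : ∀ i, a i = if i = n + 1 then (0, m n) else (m i, m n - m i))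
    (S : AddSubmonoid (ℕ × ℕ))
    (hS : S = AddSubmonoid.closure (a '' Set.Icc 1 (n + 1)))
    (P : AddSubmonoid (ℕ × ℕ))
    (hP : P = AddSubmonoid.closure (a '' (Set.Icc 1 (n + 1) \ {n - 1})))
    (q l ε : ℕ) (hq : q = (m₁ - 1) / (n - 1)) (hl : l = m₁ - q * (n - 1))
    (hε : ε = if l = n - 1 then 1 else 0) :
    (S : Set (ℕ × ℕ)) \ (P : Set (ℕ × ℕ)) =
      {x | ∃ μ lam : ℕ, (μ < q + ε ∨ lam < d) ∧
        x = a (n - 1) + μ • a n + lam • a (n + 1)} := by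
  have ha1 : ∀ i, 1 ≤ i → i ≤ n → a i = (m₁ + (i - 1) * d, (n - i) * d) := by
    intro i h1 h2
    rw [ha i, if_neg (by omega), hm i, hm n]
    have h3 : (n - i) * d + (i - 1) * d = (n - 1) * d := by
      rw [← Nat.add_mul]; congr 1; omega
    have hsub : m₁ + (n - 1) * d - (m₁ + (i - 1) * d) = (n - i) * d := by omega
    rw [hsub]
  have ha2 : a (n + 1) = (0, m₁ + (n - 1) * d) := by
    rw [ha (n + 1), if_pos rfl, hm n]
  -- division facts
  have hdm := Nat.div_add_mod (m₁ - 1) (n - 1)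
  rw [← hq] at hdm
  have hmodlt : (m₁ - 1) % (n - 1) < n - 1 := Nat.mod_lt _ (by omega)
  have hqn : (n - 1) * q = q * (n - 1) := by ring
  have hl1 : 1 ≤ l := by omega
  have hln : l ≤ n - 1 := by omega
  have hml : m₁ = q * (n - 1) + l := by omega
  -- bridge between the two formulations of the bound on μ
  have bridge : ∀ μ : ℕ, q + ε ≤ μ ↔ m₁ ≤ μ * (n - 1) + (n - 2) := by
    intro μ
    constructor
    · intro hle
      by_cases hε1 : l = n - 1
      · rw [hε1] at hml
        have h4 : (q + 1) * (n - 1) ≤ μ * (n - 1) :=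
          Nat.mul_le_mul_right _ (by rw [hε, if_pos hε1] at hle; omega)
        have h5 : (q + 1) * (n - 1) = q * (n - 1) + (n - 1) := by ring
        omega
      · have h4 : q * (n - 1) ≤ μ * (n - 1) :=
          Nat.mul_le_mul_right _ (by rw [hε, if_neg hε1] at hle; omega)
        omega
    · intro hle
      by_contra hcon
      push_neg at hcon
      by_cases hε1 : l = n - 1
      · rw [hε, if_pos hε1] at hcon
        have h4 : μ * (n - 1) ≤ q * (n - 1) := Nat.mul_le_mul_right _ (by omega)
        omega
      · rw [hε, if_neg hε1] at hcon
        have h4 : (μ + 1) * (n - 1) ≤ q * (n - 1) := Nat.mul_le_mul_right _ (by omega)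
        have h5 : (μ + 1) * (n - 1) = μ * (n - 1) + (n - 1) := by ring
        omega
  ext x
  simp only [Set.mem_diff, SetLike.mem_coe, Set.mem_setOf_eq]
  constructor
  · rintro ⟨hxS, hxP⟩
    rw [hS] at hxS
    obtain ⟨c, hc, hcsum⟩ := mem_closure_image_iff.1 hxS
    rcases structure_lemma hn ha1 (c.count (n - 1)) c rfl hc with hmem | ⟨μ, lam, hform⟩
    · exact absurd (by rw [hP, ← hcsum]; exact hmem) hxP
    · refine ⟨μ, lam, ?_, by rw [← hcsum, hform]⟩
      by_contra hcon
      push_neg at hcon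
      apply hxP
      rw [hP, ← hcsum, hform]
      exact construct hn hd hnm ha1 ha2 ((bridge μ).1 hcon.1) hcon.2
  · rintro ⟨μ, lam, hcond, rfl⟩
    constructor
    · rw [hS]
      have hg : ∀ i, 1 ≤ i → i ≤ n + 1 →
          a i ∈ AddSubmonoid.closure (a '' Set.Icc 1 (n + 1)) := fun i h1 h2 =>
        AddSubmonoid.subset_closure ⟨i, Set.mem_Icc.2 ⟨h1, h2⟩, rfl⟩
      refine add_mem (add_mem ?_ ?_) ?_
      · exact hg (n - 1) (by omega) (by omega)
      · exact AddSubmonoid.nsmul_mem _ (hg n (by omega) (by omega)) _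
      · exact AddSubmonoid.nsmul_mem _ (hg (n + 1) (by omega) le_rfl) _
    · intro hmemP
      rw [hP] at hmemP
      obtain ⟨hBc, hlamc⟩ := analysis hn hm₁ hd hgcd ha1 ha2 hmemP
      have := (bridge μ).2 hBc
      omega
end

section
/- Suppose r = n − 1 and n − 1 > m_1. Then S \ P_{n−1} = {a_{n−1} + μ·a_n + λ·a_{n+1} : μ ∈ ℕ and 0 ≤ λ ≤ d − 1}. -/
private lemma aval {n m₁ d : ℕ} {m : ℕ → ℕ} {a : ℕ → ℕ × ℕ} (hn : 4 ≤ n)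
    (hm : ∀ i, m i = m₁ + (i - 1) * d)
    (ha : ∀ i, a i = if i = n + 1 then (0, m n) else (m i, m n - m i))
    {i : ℕ} (h1 : 1 ≤ i) (h2 : i ≤ n) :
    a i = (m₁ + (i - 1) * d, (n - i) * d) := by
  rw [ha i, if_neg (by omega), hm i, hm n]
  have h3 : (n - 1) * d = (n - i) * d + (i - 1) * d := by
    rw [← add_mul]; congr 1; omega
  simp only [Prod.mk.injEq]
  exact ⟨trivial, by omega⟩

private lemma repS {n m₁ d : ℕ} {m : ℕ → ℕ} {a : ℕ → ℕ × ℕ} (hn : 4 ≤ n)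
    (hm : ∀ i, m i = m₁ + (i - 1) * d)
    (ha : ∀ i, a i = if i = n + 1 then (0, m n) else (m i, m n - m i))
    {x : ℕ × ℕ} (hx : x ∈ AddSubmonoid.closure (a '' Set.Icc 1 (n + 1))) :
    ∃ t s q : ℕ, s ≤ t ∧ q ≤ s * (n - 1) ∧
      x.1 = s * m₁ + q * d ∧ x.1 + x.2 = t * (m₁ + (n - 1) * d) := by
  induction hx using AddSubmonoid.closure_induction with
  | mem y hy =>
    obtain ⟨i, hi, rfl⟩ := hy
    simp only [Set.mem_Icc] at hi
    by_cases hc : i = n + 1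
    · subst hc
      refine ⟨1, 0, 0, by omega, by omega, ?_, ?_⟩
      · rw [ha]; simp
      · rw [ha]; simp [hm]
    · have hv := aval hn hm ha hi.1 (by omega)
      refine ⟨1, 1, i - 1, le_refl _, by omega, by rw [hv]; simp, ?_⟩
      rw [hv]
      have h3 : (n - 1) * d = (n - i) * d + (i - 1) * d := by
        rw [← add_mul]; congr 1; omega
      show m₁ + (i - 1) * d + (n - i) * d = 1 * (m₁ + (n - 1) * d)
      omega
  | zero => exact ⟨0, 0, 0, by simp⟩
  | add y z hy hz ihy ihz =>
    obtain ⟨t1, s1, q1, h11, h12, h13, h14⟩ := ihy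
    obtain ⟨t2, s2, q2, h21, h22, h23, h24⟩ := ihz
    have e1 : (s1 + s2) * (n - 1) = s1 * (n - 1) + s2 * (n - 1) := by ring
    have e2 : (s1 + s2) * m₁ = s1 * m₁ + s2 * m₁ := by ring
    have e3 : (q1 + q2) * d = q1 * d + q2 * d := by ring
    have e4 : (t1 + t2) * (m₁ + (n - 1) * d)
        = t1 * (m₁ + (n - 1) * d) + t2 * (m₁ + (n - 1) * d) := by ring
    exact ⟨t1 + t2, s1 + s2, q1 + q2, by omega, by omega,
      by simp only [Prod.fst_add]; omega,
      by simp only [Prod.fst_add, Prod.snd_add]; omega⟩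

private lemma repP {n m₁ d : ℕ} {m : ℕ → ℕ} {a : ℕ → ℕ × ℕ} (hn : 4 ≤ n)
    (hm : ∀ i, m i = m₁ + (i - 1) * d)
    (ha : ∀ i, a i = if i = n + 1 then (0, m n) else (m i, m n - m i))
    {x : ℕ × ℕ}
    (hx : x ∈ AddSubmonoid.closure (a '' (Set.Icc 1 (n + 1) \ {n - 1}))) :
    ∃ t s q : ℕ, s ≤ t ∧ q ≤ s * (n - 1) ∧ q + 1 ≠ s * (n - 1) ∧
      x.1 = s * m₁ + q * d ∧ x.1 + x.2 = t * (m₁ + (n - 1) * d) := by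
  induction hx using AddSubmonoid.closure_induction with
  | mem y hy =>
    obtain ⟨i, hi, rfl⟩ := hy
    obtain ⟨hi1, hi2⟩ := hi
    simp only [Set.mem_Icc] at hi1
    simp only [Set.mem_singleton_iff] at hi2
    by_cases hc : i = n + 1
    · subst hc
      refine ⟨1, 0, 0, by omega, by omega, by omega, ?_, ?_⟩
      · rw [ha]; simp
      · rw [ha]; simp [hm]
    · have hv := aval hn hm ha hi1.1 (by omega)
      refine ⟨1, 1, i - 1, le_refl _, by omega, by omega, by rw [hv]; simp, ?_⟩
      rw [hv]
      have h3 : (n - 1) * d = (n - i) * d + (i - 1) * d := by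
        rw [← add_mul]; congr 1; omega
      show m₁ + (i - 1) * d + (n - i) * d = 1 * (m₁ + (n - 1) * d)
      omega
  | zero => exact ⟨0, 0, 0, by simp⟩
  | add y z hy hz ihy ihz =>
    obtain ⟨t1, s1, q1, h11, h12, h15, h13, h14⟩ := ihy
    obtain ⟨t2, s2, q2, h21, h22, h25, h23, h24⟩ := ihz
    have e1 : (s1 + s2) * (n - 1) = s1 * (n - 1) + s2 * (n - 1) := by ring
    have e2 : (s1 + s2) * m₁ = s1 * m₁ + s2 * m₁ := by ring
    have e3 : (q1 + q2) * d = q1 * d + q2 * d := by ring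
    have e4 : (t1 + t2) * (m₁ + (n - 1) * d)
        = t1 * (m₁ + (n - 1) * d) + t2 * (m₁ + (n - 1) * d) := by ring
    exact ⟨t1 + t2, s1 + s2, q1 + q2, by omega, by omega, by omega,
      by simp only [Prod.fst_add]; omega,
      by simp only [Prod.fst_add, Prod.snd_add]; omega⟩

private lemma genP {n : ℕ} {a : ℕ → ℕ × ℕ}
    {i : ℕ} (h1 : 1 ≤ i) (h2 : i ≤ n + 1) (h3 : i ≠ n - 1) :
    a i ∈ AddSubmonoid.closure (a '' (Set.Icc 1 (n + 1) \ {n - 1})) :=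
  AddSubmonoid.subset_closure ⟨i, ⟨Set.mem_Icc.mpr ⟨h1, h2⟩, by simpa using h3⟩, rfl⟩

private lemma memP {n m₁ d : ℕ} {m : ℕ → ℕ} {a : ℕ → ℕ × ℕ} (hn : 4 ≤ n)
    (hm : ∀ i, m i = m₁ + (i - 1) * d)
    (ha : ∀ i, a i = if i = n + 1 then (0, m n) else (m i, m n - m i))
    (s q e lam : ℕ) (hqe : q + e = s * (n - 1)) (he : e ≠ 1) :
    (s * m₁ + q * d, e * d + lam * (m₁ + (n - 1) * d)) ∈
      AddSubmonoid.closure (a '' (Set.Icc 1 (n + 1) \ {n - 1})) := by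
  set C := AddSubmonoid.closure (a '' (Set.Icc 1 (n + 1) \ {n - 1})) with hC
  have hlast : a (n + 1) = ((0 : ℕ), m₁ + (n - 1) * d) := by
    rw [ha, if_pos rfl, hm]
  have h3 : a 1 = (m₁, (n - 1) * d) := by
    have := aval hn hm ha (le_refl 1) (by omega); simpa using this
  have core : ∀ s q e : ℕ, q + e = s * (n - 1) → e ≠ 1 →
      (s * m₁ + q * d, e * d) ∈ C := by
    intro s
    induction s with
    | zero =>
      intro q e hqe he
      have hq0 : q = 0 ∧ e = 0 := by omega
      obtain ⟨rfl, rfl⟩ := hq0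
      simp only [Nat.zero_mul, Nat.mul_zero, Nat.zero_add]
      exact zero_mem C
    | succ s ih =>
      intro q e hqe he
      have hexp : (s + 1) * (n - 1) = s * (n - 1) + (n - 1) := by ring
      by_cases hq : n - 1 ≤ q
      · have hmem := ih (q - (n - 1)) e (by omega) he
        have han : a n = (m₁ + (n - 1) * d, (0 : ℕ)) := by
          have := aval hn hm ha (by omega) le_rfl
          simpa using this
        have key : ((s + 1) * m₁ + q * d, e * d)
            = a n + (s * m₁ + (q - (n - 1)) * d, e * d) := by
          rw [han, Prod.mk_add_mk, Prod.mk.injEq]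
          have h1 : (s + 1) * m₁ = m₁ + s * m₁ := by ring
          have h2 : ((n - 1) + (q - (n - 1))) * d = (n - 1) * d + (q - (n - 1)) * d :=
            add_mul _ _ _
          have h3 : (n - 1) + (q - (n - 1)) = q := by omega
          rw [h3] at h2
          exact ⟨by omega, by omega⟩
        rw [key]
        exact add_mem (genP (by omega) (by omega) (by omega)) hmem
      · by_cases hq2 : q = n - 2
        · have hs1 : 1 ≤ s := by
            rcases Nat.eq_zero_or_pos s with h0 | h; · exfalso; subst h0; omega
            exact h
          have h1 : a (n - 2) = (m₁ + (n - 3) * d, 2 * d) := by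
            have h := aval hn hm ha (i := n - 2) (by omega) (by omega)
            rw [show n - 2 - 1 = n - 3 by omega, show n - (n - 2) = 2 by omega] at h
            exact h
          have h2 : a 2 = (m₁ + d, (n - 2) * d) := by
            have h := aval hn hm ha (i := 2) (by omega) (by omega)
            norm_num at h
            exact h
          have key : ((s + 1) * m₁ + q * d, e * d)
              = a (n - 2) + (a 2 + (s - 1) • a 1) := by
            rw [h1, h2, h3, Prod.smul_mk, smul_eq_mul, smul_eq_mul,
              Prod.mk_add_mk, Prod.mk_add_mk, Prod.mk.injEq]
            have eA : (s + 1) * m₁ = (s - 1) * m₁ + 2 * m₁ := by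
              rw [show s + 1 = (s - 1) + 2 by omega]; ring
            have eB : (n - 2) * d = (n - 3) * d + d := by
              rw [show n - 2 = (n - 3) + 1 by omega]; ring
            have eF : (s + 1) * (n - 1) = (s - 1) * (n - 1) + 2 * (n - 1) := by
              rw [show s + 1 = (s - 1) + 2 by omega]; ring
            have eC : e = (s - 1) * (n - 1) + n := by omega
            have eD : ((s - 1) * (n - 1) + n) * d
                = (s - 1) * ((n - 1) * d) + n * d := by ring
            have eE : (2 + (n - 2)) * d = 2 * d + (n - 2) * d := by ring
            rw [show 2 + (n - 2) = n by omega] at eE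
            constructor
            · rw [hq2]; omega
            · rw [eC, eD]; omega
          rw [key]
          exact add_mem (genP (by omega) (by omega) (by omega))
            (add_mem (genP (by omega) (by omega) (by omega))
              (AddSubmonoid.nsmul_mem C (genP (by omega) (by omega) (by omega)) _))
        · have h1 : a (q + 1) = (m₁ + q * d, (n - 1 - q) * d) := by
            have h := aval hn hm ha (i := q + 1) (by omega) (by omega)
            rw [show q + 1 - 1 = q by omega, show n - (q + 1) = n - 1 - q by omega] at h
            exact h
          have key : ((s + 1) * m₁ + q * d, e * d) = a (q + 1) + s • a 1 := by
            rw [h1, h3, Prod.smul_mk, smul_eq_mul, smul_eq_mul,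
              Prod.mk_add_mk, Prod.mk.injEq]
            have eA : (s + 1) * m₁ = s * m₁ + m₁ := by ring
            have eC : e = s * (n - 1) + (n - 1 - q) := by omega
            have eD : (s * (n - 1) + (n - 1 - q)) * d
                = s * ((n - 1) * d) + (n - 1 - q) * d := by ring
            constructor
            · omega
            · rw [eC, eD]; omega
          rw [key]
          exact add_mem (genP (by omega) (by omega) (by omega))
            (AddSubmonoid.nsmul_mem C (genP (by omega) (by omega) (by omega)) _)
  have hkey : (s * m₁ + q * d, e * d + lam * (m₁ + (n - 1) * d))
      = (s * m₁ + q * d, e * d) + lam • a (n + 1) := by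
    rw [hlast, Prod.smul_mk, smul_eq_mul, smul_eq_mul, Prod.mk_add_mk, Prod.mk.injEq]
    constructor <;> simp
  rw [hkey]
  exact add_mem (core s q e hqe he)
    (AddSubmonoid.nsmul_mem C (genP le_add_self le_rfl (by omega)) _)

set_option maxHeartbeats 1000000 in
private lemma intCases (d m₁ K sN qN s' q' t lam : ℕ) (hd : 0 < d) (hm₁ : 0 < m₁)
    (hK : 3 ≤ K) (hgcd : Nat.gcd m₁ d = 1)
    (hq' : q' ≤ s' * K) (hne : q' + 1 ≠ s' * K)
    (hqN : qN + 1 = sN * K)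
    (hkey : s' * m₁ + q' * d = sN * m₁ + qN * d)
    (hst : s' ≤ t) (ht : t = sN + lam) (hlam : lam < d) : False := by
  have hco : IsCoprime (d : ℤ) (m₁ : ℤ) := by
    rw [Int.isCoprime_iff_gcd_eq_one, Int.gcd_natCast_natCast, Nat.gcd_comm]
    exact hgcd
  have ckey : (s' : ℤ) * m₁ + q' * d = (sN : ℤ) * m₁ + (qN : ℤ) * d := by
    exact_mod_cast hkey
  have hdvd : (d : ℤ) ∣ ((s' : ℤ) - sN) := by
    refine hco.dvd_of_dvd_mul_right ⟨(qN : ℤ) - q', ?_⟩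
    linear_combination ckey
  obtain ⟨k, hk⟩ := hdvd
  have hd0 : (d : ℤ) ≠ 0 := by exact_mod_cast hd.ne'
  have hq'k : (q' : ℤ) = qN - k * m₁ := by
    have hmul : ((qN : ℤ) - q') * d = (k * m₁) * d := by
      linear_combination (m₁ : ℤ) * hk - ckey
    have h2 := mul_right_cancel₀ hd0 hmul
    linarith
  have cq' : (q' : ℤ) ≤ (s' : ℤ) * (K : ℤ) := by exact_mod_cast hq'
  have chq : (qN : ℤ) + 1 = (sN : ℤ) * (K : ℤ) := by exact_mod_cast hqN
  have hKz : (3 : ℤ) ≤ (K : ℤ) := by exact_mod_cast hK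
  have hm1 : (1 : ℤ) ≤ (m₁ : ℤ) := by exact_mod_cast hm₁
  have hdz : (1 : ℤ) ≤ (d : ℤ) := by exact_mod_cast hd
  rcases lt_trichotomy k 0 with hk1 | hk1 | hk1
  · have hk2 : k ≤ -1 := by omega
    have e1 : (d : ℤ) * k ≤ -d := by nlinarith
    have hs'le : (s' : ℤ) ≤ (sN : ℤ) - d := by linarith
    have e2 : (m₁ : ℤ) ≤ -(k * m₁) := by nlinarith
    have hq'ge : (qN : ℤ) + m₁ ≤ (q' : ℤ) := by rw [hq'k]; linarith
    have hsK : (s' : ℤ) * (K : ℤ) ≤ ((sN : ℤ) - d) * (K : ℤ) :=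
      mul_le_mul_of_nonneg_right hs'le (by linarith)
    have e3 : ((sN : ℤ) - d) * (K : ℤ) = (sN : ℤ) * K - d * K := by ring
    have e4 : (3 : ℤ) ≤ (d : ℤ) * (K : ℤ) := by nlinarith
    linarith
  · subst hk1
    apply hne
    have hs'eq : (s' : ℤ) = (sN : ℤ) := by linarith
    have hq'eq : (q' : ℤ) = (qN : ℤ) := by rw [hq'k]; ring
    have hs'N : s' = sN := by exact_mod_cast hs'eq
    have hq'N : q' = qN := by exact_mod_cast hq'eq
    rw [hs'N, hq'N]; exact hqN
  · have hk2 : 1 ≤ k := by omega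
    have e1 : (d : ℤ) ≤ (d : ℤ) * k := by nlinarith
    have hs'ge : (sN : ℤ) + d ≤ (s' : ℤ) := by linarith
    have cst : (s' : ℤ) ≤ (t : ℤ) := by exact_mod_cast hst
    have ctv : (t : ℤ) = (sN : ℤ) + lam := by exact_mod_cast ht
    have clam : (lam : ℤ) < (d : ℤ) := by exact_mod_cast hlam
    linarith
set_option maxHeartbeats 1000000 in
/-- For the projective monomial curve associated to an arithmetic
sequence, if `r = n-1 > m_1`, then
`S \ P_{n-1} = {a_{n-1} + μ·a_n + λ·a_{n+1} : μ ∈ ℕ, 0 ≤ λ ≤ d-1}` (written with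
`λ < d`). -/
theorem stmt_13 (n m₁ d : ℕ) (hn : 4 ≤ n) (hm₁ : 0 < m₁) (hd : 0 < d)
    (hgcd : Nat.gcd m₁ d = 1) (hnm : m₁ < n - 1)
    (m : ℕ → ℕ) (hm : ∀ i, m i = m₁ + (i - 1) * d)
    (a : ℕ → ℕ × ℕ)
    (ha : ∀ i, a i = if i = n + 1 then (0, m n) else (m i, m n - m i))
    (S : AddSubmonoid (ℕ × ℕ))
    (hS : S = AddSubmonoid.closure (a '' Set.Icc 1 (n + 1)))
    (P : AddSubmonoid (ℕ × ℕ))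
    (hP : P = AddSubmonoid.closure (a '' (Set.Icc 1 (n + 1) \ {n - 1}))) :
    (S : Set (ℕ × ℕ)) \ (P : Set (ℕ × ℕ)) =
      {x | ∃ μ lam : ℕ, lam < d ∧ x = a (n - 1) + μ • a n + lam • a (n + 1)} := by
  subst hS hP
  have hM : 0 < m₁ + (n - 1) * d := by omega
  have h1v : a (n - 1) = (m₁ + (n - 2) * d, 1 * d) := by
    have h := aval hn hm ha (i := n - 1) (by omega) (by omega)
    rw [show n - 1 - 1 = n - 2 by omega, show n - (n - 1) = 1 by omega] at h
    exact h
  have h2v : a n = (m₁ + (n - 1) * d, 0 * d) := by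
    have h := aval hn hm ha (i := n) (by omega) le_rfl
    rw [show n - n = 0 by omega] at h; exact h
  have h3v : a (n + 1) = ((0 : ℕ), m₁ + (n - 1) * d) := by rw [ha, if_pos rfl, hm]
  ext x
  simp only [Set.mem_diff, SetLike.mem_coe, Set.mem_setOf_eq]
  constructor
  · rintro ⟨hxS, hxP⟩
    obtain ⟨t, s, q, hst, hq, hx1, hsum⟩ := repS hn hm ha hxS
    have hq1 : q + 1 = s * (n - 1) := by
      by_contra hq1
      apply hxP
      have hmem := memP hn hm ha s q (s * (n - 1) - q) (t - s) (by omega) (by omega)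
      have hx : x = (s * m₁ + q * d,
          (s * (n - 1) - q) * d + (t - s) * (m₁ + (n - 1) * d)) := by
        have hA : (s + (t - s)) * (m₁ + (n - 1) * d)
            = s * (m₁ + (n - 1) * d) + (t - s) * (m₁ + (n - 1) * d) := by ring
        rw [show s + (t - s) = t by omega] at hA
        have hCc : s * (m₁ + (n - 1) * d) = s * m₁ + s * ((n - 1) * d) := by ring
        have hD : (q + (s * (n - 1) - q)) * d = q * d + (s * (n - 1) - q) * d := by ring
        rw [show q + (s * (n - 1) - q) = s * (n - 1) by omega] at hD
        have hF : (s * (n - 1)) * d = s * ((n - 1) * d) := by ring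
        rw [show x = (x.1, x.2) from rfl, Prod.mk.injEq]
        exact ⟨hx1, by omega⟩
      rw [hx]; exact hmem
    have hs1 : 1 ≤ s := by
      rcases Nat.eq_zero_or_pos s with h0 | h
      · exfalso; subst h0; omega
      · exact h
    have hqm : m₁ ≤ q := by
      have h0 : 1 * (n - 1) ≤ s * (n - 1) := Nat.mul_le_mul_right _ hs1
      omega
    have htd : t < s + d := by
      by_contra htd
      push_neg at htd
      apply hxP
      have hqe2 : (q - m₁) + (1 + d * (n - 1) + m₁) = (s + d) * (n - 1) := by
        have h0 : (s + d) * (n - 1) = s * (n - 1) + d * (n - 1) := by ring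
        omega
      have hmem := memP hn hm ha (s + d) (q - m₁) (1 + d * (n - 1) + m₁)
        (t - (s + d)) hqe2 (by omega)
      have hx : x = ((s + d) * m₁ + (q - m₁) * d,
          (1 + d * (n - 1) + m₁) * d + (t - (s + d)) * (m₁ + (n - 1) * d)) := by
        have e1 : (s + d) * m₁ = s * m₁ + d * m₁ := by ring
        have e2 : (m₁ + (q - m₁)) * d = m₁ * d + (q - m₁) * d := by ring
        rw [show m₁ + (q - m₁) = q by omega] at e2
        have e3 : d * m₁ = m₁ * d := by ring
        have hA : ((s + d) + (t - (s + d))) * (m₁ + (n - 1) * d)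
            = (s + d) * (m₁ + (n - 1) * d) + (t - (s + d)) * (m₁ + (n - 1) * d) := by
          ring
        rw [show (s + d) + (t - (s + d)) = t by omega] at hA
        have hB : (s + d) * (m₁ + (n - 1) * d)
            = (s + d) * m₁ + (s + d) * ((n - 1) * d) := by ring
        have hCc : ((q - m₁) + (1 + d * (n - 1) + m₁)) * d
            = (q - m₁) * d + (1 + d * (n - 1) + m₁) * d := by ring
        rw [hqe2] at hCc
        have hE : ((s + d) * (n - 1)) * d = (s + d) * ((n - 1) * d) := by ring
        rw [show x = (x.1, x.2) from rfl, Prod.mk.injEq]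
        exact ⟨by omega, by omega⟩
      rw [hx]; exact hmem
    refine ⟨s - 1, t - s, by omega, ?_⟩
    rw [h1v, h2v, h3v, Prod.smul_mk, Prod.smul_mk, smul_eq_mul, smul_eq_mul,
      smul_eq_mul, smul_eq_mul, Prod.mk_add_mk, Prod.mk_add_mk]
    have hE1 : ((s - 1) + 1) * (n - 1) = (s - 1) * (n - 1) + (n - 1) := by ring
    rw [show (s - 1) + 1 = s by omega] at hE1
    have k0 : q = (s - 1) * (n - 1) + (n - 2) := by omega
    have k1 : (s - 1) * (m₁ + (n - 1) * d) = (s - 1) * m₁ + (s - 1) * ((n - 1) * d) := by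
      ring
    have k2 : ((s - 1) + 1) * m₁ = (s - 1) * m₁ + m₁ := by ring
    rw [show (s - 1) + 1 = s by omega] at k2
    have k3 : ((s - 1) * (n - 1) + (n - 2)) * d
        = (s - 1) * ((n - 1) * d) + (n - 2) * d := by ring
    have k4 : q * d = (s - 1) * ((n - 1) * d) + (n - 2) * d := by rw [k0]; exact k3
    have k5 : s * (m₁ + (n - 1) * d) = s * m₁ + s * ((n - 1) * d) := by ring
    have k6 : (q + 1) * d = q * d + 1 * d := by ring
    rw [hq1] at k6
    have k7 : (s * (n - 1)) * d = s * ((n - 1) * d) := by ring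
    have k8 : (s + (t - s)) * (m₁ + (n - 1) * d)
        = s * (m₁ + (n - 1) * d) + (t - s) * (m₁ + (n - 1) * d) := by ring
    rw [show s + (t - s) = t by omega] at k8
    have k9 : (s - 1) * (0 * d) = 0 := by simp
    rw [show x = (x.1, x.2) from rfl, Prod.mk.injEq]
    exact ⟨by omega, by omega⟩
  · rintro ⟨μ, lam, hlam, rfl⟩
    have g1 : a (n - 1) ∈ AddSubmonoid.closure (a '' Set.Icc 1 (n + 1)) :=
      AddSubmonoid.subset_closure ⟨n - 1, Set.mem_Icc.mpr ⟨by omega, by omega⟩, rfl⟩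
    have g2 : a n ∈ AddSubmonoid.closure (a '' Set.Icc 1 (n + 1)) :=
      AddSubmonoid.subset_closure ⟨n, Set.mem_Icc.mpr ⟨by omega, by omega⟩, rfl⟩
    have g3 : a (n + 1) ∈ AddSubmonoid.closure (a '' Set.Icc 1 (n + 1)) :=
      AddSubmonoid.subset_closure ⟨n + 1, Set.mem_Icc.mpr ⟨by omega, by omega⟩, rfl⟩
    refine ⟨add_mem (add_mem g1 (AddSubmonoid.nsmul_mem _ g2 μ))
      (AddSubmonoid.nsmul_mem _ g3 lam), ?_⟩
    intro hxP
    obtain ⟨t, s', q', hst, hq', hne, hx1, hsum⟩ := repP hn hm ha hxP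
    simp only [h1v, h2v, h3v, Prod.smul_mk, smul_eq_mul, Prod.mk_add_mk] at hx1 hsum
    have w1 : (μ + 1) * m₁ = m₁ + μ * m₁ := by ring
    have w2 : (μ * (n - 1) + (n - 2)) * d = μ * ((n - 1) * d) + (n - 2) * d := by ring
    have w3 : μ * (m₁ + (n - 1) * d) = μ * m₁ + μ * ((n - 1) * d) := by ring
    have w6 : μ * (0 * d) = 0 := by simp
    have keyN : s' * m₁ + q' * d
        = (μ + 1) * m₁ + (μ * (n - 1) + (n - 2)) * d := by omega
    have w4 : (1 + μ + lam) * (m₁ + (n - 1) * d) = (m₁ + (n - 1) * d)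
        + μ * (m₁ + (n - 1) * d) + lam * (m₁ + (n - 1) * d) := by ring
    have w5 : (n - 1) * d = (n - 2) * d + 1 * d := by
      rw [show n - 1 = (n - 2) + 1 by omega]; ring
    have wA : t * (m₁ + (n - 1) * d) = (1 + μ + lam) * (m₁ + (n - 1) * d) := by omega
    have ht : t = 1 + μ + lam := Nat.eq_of_mul_eq_mul_right hM wA
    have w7 : (μ + 1) * (n - 1) = μ * (n - 1) + (n - 1) := by ring
    have hqN : (μ * (n - 1) + (n - 2)) + 1 = (μ + 1) * (n - 1) := by omega
    exact intCases d m₁ (n - 1) (μ + 1) (μ * (n - 1) + (n - 2)) s' q' t lam hd hm₁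
      (by omega) hgcd hq' hne hqN keyN hst (by omega) hlam
end

section
/- For every r ∈ {2, …, n−1}, the finite set (P_r)₀ = {s ∈ P_r : s − a_n ∉ P_r and s − a_{n+1} ∉ P_r} has exactly m_n elements if and only if r ≤ m_1 or r = n − 1. (By the paper's cardinality criterion for Cohen–Macaulayness, with D = m_n here, this says that the semigroup ring K[P_r] is Cohen–Macaulay if and only if r ≤ m_1 or r = n − 1.) -/
-- assume t1 contents (will concatenate later); for dev, re-import by pasting

def Excl (n r j s : ℕ) : Prop :=
  (r = 2 ∧ s = 1) ∨ (r + 1 = n ∧ s + 1 = j * (n - 1)) ∨ (j = 1 ∧ s + 1 = r)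

def TS (n r j s : ℕ) : Prop := s ≤ j * (n - 1) ∧ ¬ Excl n r j s

def TM (n r j s : ℕ) : Prop :=
  ∃ l : Multiset ℕ, (∀ x ∈ l, x < n ∧ x + 1 ≠ r) ∧ Multiset.card l = j ∧ l.sum = s

lemma tm_sum_le {n r j s : ℕ} (h : TM n r j s) : s ≤ j * (n - 1) := by
  obtain ⟨l, hl, hc, hs⟩ := h
  subst hc hs
  calc l.sum ≤ Multiset.card l • (n-1) := by
        apply Multiset.sum_le_card_nsmul
        intro x hx; have := (hl x hx).1; omega
    _ = Multiset.card l * (n - 1) := by simp [smul_eq_mul]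

lemma tm_not_top {n r : ℕ} (hn : 4 ≤ n) (hrn : r + 1 = n) :
    ∀ l : Multiset ℕ, (∀ x ∈ l, x < n ∧ x + 1 ≠ r) →
      l.sum + 1 ≠ Multiset.card l * (n - 1) := by
  intro l
  induction l using Multiset.induction with
  | empty => intro _; simp
  | cons x l ih =>
    intro hl h
    have hx := hl x (Multiset.mem_cons_self x l)
    have hsum : l.sum ≤ Multiset.card l * (n - 1) :=
      tm_sum_le ⟨l, fun y hy => hl y (Multiset.mem_cons_of_mem hy), rfl, rfl⟩
    simp only [Multiset.sum_cons, Multiset.card_cons] at h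
    have hexp : (Multiset.card l + 1) * (n - 1) = Multiset.card l * (n - 1) + (n - 1) := by
      ring
    have hx2 : x ≠ n - 2 := by omega
    have : l.sum + 1 = Multiset.card l * (n - 1) ∧ x = n - 1 := by omega
    exact ih (fun y hy => hl y (Multiset.mem_cons_of_mem hy)) this.1

lemma tm_to_ts {n r j s : ℕ} (hn : 4 ≤ n) (hr₁ : 2 ≤ r) (hrn : r + 1 ≤ n) (h : TM n r j s) :
    TS n r j s := by
  refine ⟨tm_sum_le h, ?_⟩
  obtain ⟨l, hl, rfl, rfl⟩ := h
  rintro (⟨hr2, hs1⟩ | ⟨hrn', htop⟩ | ⟨hj1, hsr⟩)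
  · -- r = 2, sum = 1 : impossible since all elements are 0 or ≥ 2
    induction l using Multiset.induction with
    | empty => simp at hs1
    | cons x l ih =>
      simp only [Multiset.sum_cons] at hs1
      have hx := hl x (Multiset.mem_cons_self x l)
      have hsum : l.sum ≤ Multiset.card l * (n - 1) :=
        tm_sum_le ⟨l, fun y hy => hl y (Multiset.mem_cons_of_mem hy), rfl, rfl⟩
      have hx1 : x ≠ 1 := by omega
      have : x = 0 ∧ l.sum = 1 := by omega
      exact ih (fun y hy => hl y (Multiset.mem_cons_of_mem hy)) this.2
  · exact tm_not_top hn hrn' l hl htop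
  · -- card = 1
    obtain ⟨x, rfl⟩ := Multiset.card_eq_one.mp hj1
    have hx := hl x (Multiset.mem_singleton_self x)
    simp only [Multiset.sum_singleton] at hsr
    omega

lemma ts_to_tm {n r : ℕ} (hn : 4 ≤ n) (hr₁ : 2 ≤ r) (hrn : r + 1 ≤ n) :
    ∀ j s, TS n r j s → TM n r j s := by
  intro j
  induction j with
  | zero =>
    intro s hs
    have : s = 0 := by
      have := hs.1; omega
    exact ⟨0, by simp, by simp, by simp [this]⟩
  | succ j ih =>
    intro s hs
    obtain ⟨hb, hne⟩ := hs
    simp only [Excl, not_or, not_and_or] at hne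
    have hexp : (j + 1) * (n - 1) = j * (n - 1) + (n - 1) := by ring
    -- helper to finish: given an element x and remaining sum s', conclude
    have cons_case : ∀ x s', x < n → x + 1 ≠ r → TS n r j s' → x + s' = s → TM n r (j+1) s := by
      intro x s' hx hxr hts heq
      obtain ⟨l, hl, hc, hsum⟩ := ih s' hts
      exact ⟨x ::ₘ l, by
        intro y hy
        rcases Multiset.mem_cons.mp hy with h | h
        · subst h; exact ⟨hx, hxr⟩
        · exact hl y h, by simp [hc], by simp [hsum, heq]⟩
    by_cases hsmall : s ≤ n - 1
    · have h20 : j * (n-1) = 0 ∨ n - 1 ≤ j * (n - 1) := by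
        rcases Nat.eq_zero_or_pos j with h | h
        · left; simp [h]
        · right; exact Nat.le_mul_of_pos_left _ h
      by_cases hsq : s + 1 = r
      · -- s = r - 1 = q; must have j ≥ 1 and q ≥ 2
        have hj1 : j + 1 ≠ 1 ∨ ¬ (s + 1 = r) := hne.2.2
        have hjge : 1 ≤ j := by
          rcases hj1 with h | h
          · omega
          · exact absurd hsq h
        have hBge : n - 1 ≤ j * (n - 1) := Nat.le_mul_of_pos_left _ (by omega)
        have hq2 : ¬ (r = 2 ∧ s = 1) := by
          rcases hne.1 with h | h <;> omega
        have hq2' : 3 ≤ r := by omega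
        -- take x = s - 1 (= q - 1 ≥ 1), remainder 1
        refine cons_case (s - 1) 1 (by omega) (by omega) ⟨by omega, ?_⟩ (by omega)
        rintro (⟨h1, h2⟩ | ⟨h1, h2⟩ | ⟨h1, h2⟩) <;> omega
      · -- take x = s, remainder 0
        refine cons_case s 0 (by omega) hsq ⟨by simp, ?_⟩ (by omega)
        rintro (⟨h1, h2⟩ | ⟨h1, h2⟩ | ⟨h1, h2⟩) <;> omega
    · -- s > n - 1, so j ≥ 1
      push_neg at hsmall
      have hjge : 1 ≤ j := by
        rcases Nat.eq_zero_or_pos j with h | h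
        · subst h; simp at hb; omega
        · exact h
      have hBge : n - 1 ≤ j * (n - 1) := Nat.le_mul_of_pos_left _ (by omega)
      by_cases h1 : r = 2 ∧ s - (n-1) = 1
      · -- take x = n - 2, remainder 2
        refine cons_case (n - 2) 2 (by omega) (by omega) ⟨by omega, ?_⟩ (by omega)
        rintro (⟨g1, g2⟩ | ⟨g1, g2⟩ | ⟨g1, g2⟩) <;> omega
      · by_cases h3 : j = 1 ∧ (s - (n-1)) + 1 = r
        · -- s = n - 1 + q with j = 1 ; take x = n - 2 (valid since r ≠ n-1 here)
          obtain ⟨hj, hsr⟩ := h3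
          subst hj
          have hrn2 : r + 1 ≠ n := by
            intro hc
            rcases hne.2.1 with h2' | h2'
            · omega
            · apply h2'; omega
          refine cons_case (n - 2) (s - (n - 2)) (by omega) (by omega) ⟨by omega, ?_⟩ (by omega)
          rintro (⟨g1, g2⟩ | ⟨g1, g2⟩ | ⟨g1, g2⟩) <;> omega
        · -- default: take x = n - 1
          have h2 : ¬ (r + 1 = n ∧ (s - (n-1)) + 1 = j * (n-1)) := by
            rintro ⟨g1, g2⟩
            rcases hne.2.1 with h2' | h2'
            · omega
            · apply h2'; omega
          refine cons_case (n - 1) (s - (n - 1)) (by omega) (by omega) ⟨by omega, ?_⟩ (by omega)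
          rintro (⟨g1, g2⟩ | ⟨g1, g2⟩ | ⟨g1, g2⟩) <;> omega

lemma ts_iff_tm {n r j s : ℕ} (hn : 4 ≤ n) (hr₁ : 2 ≤ r) (hrn : r + 1 ≤ n) :
    TS n r j s ↔ TM n r j s :=
  ⟨ts_to_tm hn hr₁ hrn j s, tm_to_ts hn hr₁ hrn⟩

lemma ts_add {n r j₁ s₁ j₂ s₂ : ℕ} (hn : 4 ≤ n) (hr₁ : 2 ≤ r) (hrn : r + 1 ≤ n)
    (h₁ : TS n r j₁ s₁) (h₂ : TS n r j₂ s₂) : TS n r (j₁ + j₂) (s₁ + s₂) := by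
  rw [ts_iff_tm hn hr₁ hrn] at h₁ h₂ ⊢
  obtain ⟨l₁, hl₁, hc₁, hs₁⟩ := h₁
  obtain ⟨l₂, hl₂, hc₂, hs₂⟩ := h₂
  exact ⟨l₁ + l₂, by
    intro x hx
    rcases Multiset.mem_add.mp hx with h | h
    exacts [hl₁ x h, hl₂ x h], by simp [hc₁, hc₂], by simp [hs₁, hs₂]⟩

def GamJ (n r m₁ d x j : ℕ) : Prop := ∃ s, TS n r j s ∧ x = j * m₁ + s * d

def Gam (n r m₁ d x : ℕ) : Prop := ∃ j, GamJ n r m₁ d x j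

noncomputable def ordG (n r m₁ d x : ℕ) : ℕ := sInf {j | GamJ n r m₁ d x j}

lemma gamJ_le {n r m₁ d x j : ℕ} (h : GamJ n r m₁ d x j) : x ≤ j * (m₁ + (n-1)*d) := by
  obtain ⟨s, ⟨hs, -⟩, rfl⟩ := h
  have h1 : s * d ≤ (j * (n-1)) * d := Nat.mul_le_mul_right d hs
  have h2 : j * (m₁ + (n-1)*d) = j * m₁ + (j * (n-1)) * d := by ring
  omega

lemma gam_ord_mem {n r m₁ d x : ℕ} (h : Gam n r m₁ d x) : GamJ n r m₁ d x (ordG n r m₁ d x) :=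
  Nat.sInf_mem h

lemma ord_le {n r m₁ d x j : ℕ} (h : GamJ n r m₁ d x j) : ordG n r m₁ d x ≤ j :=
  Nat.sInf_le h

section main
variable {n m₁ d : ℕ} (hn : 4 ≤ n) (hm₁ : 0 < m₁) (hd : 0 < d)
    (hgcd : Nat.gcd m₁ d = 1)
    (m : ℕ → ℕ) (hm : ∀ i, m i = m₁ + (i - 1) * d)
    (a : ℕ → ℕ × ℕ)
    (ha : ∀ i, a i = if i = n + 1 then (0, m n) else (m i, m n - m i))
    {r : ℕ} (hr₁ : 2 ≤ r) (hrn : r + 1 ≤ n)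
    (P : AddSubmonoid (ℕ × ℕ))
    (hP : P = AddSubmonoid.closure (a '' (Set.Icc 1 (n + 1) \ {r})))

include hn hm hr₁ hrn ha hP

lemma chain_mem : ∀ l : Multiset ℕ, (∀ x ∈ l, x < n ∧ x + 1 ≠ r) → ∀ y,
    (Multiset.card l * m₁ + l.sum * d) + y = Multiset.card l * (m₁ + (n-1)*d) →
    ((Multiset.card l * m₁ + l.sum * d, y) : ℕ × ℕ) ∈ P := by
  intro l
  induction l using Multiset.induction with
  | empty =>
    intro _ y hy
    simp only [Multiset.card_zero, Multiset.sum_zero, Nat.zero_mul, Nat.mul_zero] at hy ⊢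
    have : y = 0 := by omega
    subst this
    exact P.zero_mem
  | cons x l ih =>
    intro hl y hy
    have hx := hl x (Multiset.mem_cons_self x l)
    set C := Multiset.card l with hC
    have hsum : l.sum ≤ C * (n - 1) :=
      tm_sum_le ⟨l, fun z hz => hl z (Multiset.mem_cons_of_mem hz), rfl, rfl⟩
    have hxd : x * d ≤ (n-1) * d := Nat.mul_le_mul_right d (by omega)
    have hsd : l.sum * d ≤ (C * (n-1)) * d := Nat.mul_le_mul_right d hsum
    have e1 : (C + 1) * m₁ = C * m₁ + m₁ := by ring
    have e2 : (C + 1) * (m₁ + (n-1)*d) = C * m₁ + (C * (n-1)) * d + (m₁ + (n-1)*d) := by ring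
    have e3 : C * (m₁ + (n-1)*d) = C * m₁ + (C * (n-1)) * d := by ring
    simp only [Multiset.card_cons, Multiset.sum_cons] at hy ⊢
    rw [← hC] at hy ⊢
    have e4 : (x + l.sum) * d = x * d + l.sum * d := by ring
    set y₁ := (m₁ + (n-1)*d) - (m₁ + x * d) with hy₁
    have hy1le : m₁ + x * d ≤ m₁ + (n-1)*d := by omega
    have hyge : y₁ ≤ y := by omega
    have hmem1 : ((m₁ + x * d, y₁) : ℕ × ℕ) ∈ P := by
      rw [hP]
      apply AddSubmonoid.subset_closure
      refine ⟨x + 1, ⟨Set.mem_Icc.mpr ⟨by omega, by omega⟩, by simp; omega⟩, ?_⟩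
      rw [ha (x+1)]
      have hne : ¬ (x + 1 = n + 1) := by omega
      rw [if_neg hne]
      have hmx : m (x+1) = m₁ + x * d := by rw [hm]; simp
      have hmn : m n = m₁ + (n-1) * d := by rw [hm]
      rw [hmx, hmn]
    have hmem2 : ((C * m₁ + l.sum * d, y - y₁) : ℕ × ℕ) ∈ P := by
      apply ih (fun z hz => hl z (Multiset.mem_cons_of_mem hz))
      omega
    have := P.add_mem hmem1 hmem2
    have heq : ((m₁ + x * d, y₁) : ℕ × ℕ) + (C * m₁ + l.sum * d, y - y₁)
        = ((C + 1) * m₁ + (x + l.sum) * d, y) := by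
      rw [Prod.mk_add_mk]
      refine Prod.ext ?_ ?_ <;> simp <;> omega
    rwa [heq] at this

lemma memP_s14 : ∀ v : ℕ × ℕ, v ∈ P ↔ ∃ k j s, j ≤ k ∧ TS n r j s ∧
    v.1 = j * m₁ + s * d ∧ v.1 + v.2 = k * (m₁ + (n-1)*d) := by
  have hmn : m n = m₁ + (n-1) * d := by rw [hm]
  intro v
  constructor
  · intro hv
    rw [hP] at hv
    -- closure ≤ Q
    let Q : AddSubmonoid (ℕ × ℕ) :=
      { carrier := {v | ∃ k j s, j ≤ k ∧ TS n r j s ∧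
          v.1 = j * m₁ + s * d ∧ v.1 + v.2 = k * (m₁ + (n-1)*d)},
        zero_mem' := ⟨0, 0, 0, le_refl 0, ⟨by simp, by
          rintro (⟨h1,h2⟩|⟨h1,h2⟩|⟨h1,h2⟩) <;> omega⟩, by simp, by simp⟩,
        add_mem' := by
          rintro u w ⟨k1, j1, s1, hjk1, hts1, hx1, hs1⟩ ⟨k2, j2, s2, hjk2, hts2, hx2, hs2⟩
          refine ⟨k1 + k2, j1 + j2, s1 + s2, by omega, ts_add hn hr₁ hrn hts1 hts2, ?_, ?_⟩
          · simp only [Prod.fst_add]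
            rw [hx1, hx2]; ring
          · simp only [Prod.fst_add, Prod.snd_add]
            have : (k1 + k2) * (m₁ + (n-1)*d) = k1 * (m₁ + (n-1)*d) + k2 * (m₁ + (n-1)*d) := by
              ring
            omega }
    have hle : AddSubmonoid.closure (a '' (Set.Icc 1 (n + 1) \ {r})) ≤ Q := by
      rw [AddSubmonoid.closure_le]
      rintro w ⟨i, ⟨hiIcc, hir⟩, rfl⟩
      rw [Set.mem_Icc] at hiIcc
      rw [Set.mem_singleton_iff] at hir
      rw [ha i]
      by_cases hi : i = n + 1
      · rw [if_pos hi]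
        refine ⟨1, 0, 0, by omega, ⟨by simp, by
          rintro (⟨h1,h2⟩|⟨h1,h2⟩|⟨h1,h2⟩) <;> omega⟩, by simp, by simp [hmn]⟩
      · rw [if_neg hi]
        have hin : i ≤ n := by omega
        have hmi : m i = m₁ + (i-1) * d := hm i
        have hile : m i ≤ m n := by
          rw [hmi, hmn]
          have : (i-1) * d ≤ (n-1) * d := Nat.mul_le_mul_right d (by omega)
          omega
        refine ⟨1, 1, i - 1, le_refl 1, ⟨by omega, ?_⟩, by simpa using hmi, ?_⟩
        · rintro (⟨h1,h2⟩|⟨h1,h2⟩|⟨h1,h2⟩) <;> omega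
        · simp only
          omega
    exact hle hv
  · rintro ⟨k, j, s, hjk, hts, hx, hsum⟩
    obtain ⟨l, hl, hc, hls⟩ := ts_to_tm hn hr₁ hrn j s hts
    have hxle : v.1 ≤ j * (m₁ + (n-1)*d) := gamJ_le ⟨s, hts, hx⟩
    have h1 : ((v.1, j * (m₁ + (n-1)*d) - v.1) : ℕ × ℕ) ∈ P := by
      have h1' := chain_mem hn m hm a ha hr₁ hrn P hP l hl
        (j * (m₁ + (n-1)*d) - (j * m₁ + s * d)) (by rw [hc, hls]; omega)
      rw [hc, hls] at h1'
      rw [hx]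
      exact h1'
    have h2 : ((0, (k - j) * (m₁ + (n-1)*d)) : ℕ × ℕ) ∈ P := by
      have hg : ((0, m₁ + (n-1)*d) : ℕ × ℕ) ∈ P := by
        rw [hP]
        apply AddSubmonoid.subset_closure
        refine ⟨n + 1, ⟨Set.mem_Icc.mpr ⟨by omega, le_refl _⟩, by simp; omega⟩, ?_⟩
        rw [ha (n+1), if_pos rfl, hmn]
      have := P.nsmul_mem hg (k - j)
      simpa [Prod.smul_def, smul_eq_mul] using this
    have := P.add_mem h1 h2
    have heq : ((v.1, j * (m₁ + (n-1)*d) - v.1) : ℕ × ℕ) + (0, (k - j) * (m₁ + (n-1)*d)) = v := by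
      obtain ⟨t, rfl⟩ : ∃ t, k = j + t := ⟨k - j, by omega⟩
      rw [Prod.mk_add_mk]
      refine Prod.ext (by simp) ?_
      simp only [Nat.add_sub_cancel_left]
      have e : (j + t) * (m₁ + (n-1)*d) = j * (m₁ + (n-1)*d) + t * (m₁ + (n-1)*d) := by
        ring
      omega
    rwa [heq] at this

end main

section gamma
variable {n r m₁ d : ℕ} (hn : 4 ≤ n) (hm₁ : 0 < m₁) (hd : 0 < d)
    (hgcd : Nat.gcd m₁ d = 1) (hr₁ : 2 ≤ r) (hrn : r + 1 ≤ n)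

include hn hr₁ hrn

lemma gam_gen (i : ℕ) (hi : i ≤ n - 1) (hir : i + 1 ≠ r) : Gam n r m₁ d (m₁ + i * d) := by
  refine ⟨1, i, ⟨by omega, ?_⟩, by omega⟩
  rintro (⟨h1, h2⟩ | ⟨h1, h2⟩ | ⟨h1, h2⟩) <;> omega

lemma gam_add {x y : ℕ} (hx : Gam n r m₁ d x) (hy : Gam n r m₁ d y) : Gam n r m₁ d (x + y) := by
  obtain ⟨j1, s1, hts1, rfl⟩ := hx
  obtain ⟨j2, s2, hts2, rfl⟩ := hy
  exact ⟨j1 + j2, s1 + s2, ts_add hn hr₁ hrn hts1 hts2, by ring⟩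

lemma gam_mul (u : ℕ) {x : ℕ} (hx : Gam n r m₁ d x) : Gam n r m₁ d (u * x) := by
  induction u with
  | zero => exact ⟨0, 0, ⟨by simp, by rintro (⟨h1,h2⟩|⟨h1,h2⟩|⟨h1,h2⟩) <;> omega⟩, by simp⟩
  | succ u ih =>
    have := gam_add hn hr₁ hrn ih hx
    rwa [show (u+1)*x = u*x + x by ring]

lemma gam_D : Gam n r m₁ d (m₁ + (n-1) * d) := gam_gen hn hr₁ hrn (n-1) le_rfl (by omega)

include hm₁ hd hgcd in
lemma gam_large : ∃ N, ∀ x, N ≤ x → Gam n r m₁ d x := by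
  -- choose two coprime generators
  obtain ⟨i₁, i₂, hii, hi2, hg1, hg2⟩ :
      ∃ i₁ i₂, i₂ = i₁ + 1 ∧ i₂ ≤ n - 1 ∧ i₁ + 1 ≠ r ∧ i₂ + 1 ≠ r := by
    by_cases h : r = 2
    · exact ⟨2, 3, rfl, by omega, by omega, by omega⟩
    · exact ⟨0, 1, rfl, by omega, by omega, by omega⟩
  set A := m₁ + i₁ * d with hA
  set B := m₁ + i₂ * d with hB
  have hBA : B = A + d := by rw [hA, hB, hii]; ring
  have hcop : Nat.Coprime A B := by
    have h1 : Nat.gcd A d = 1 := by rw [hA, Nat.gcd_add_mul_right_left, hgcd]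
    unfold Nat.Coprime
    rw [hBA, add_comm A d, Nat.gcd_add_self_right, h1]
  have hA1 : 0 < A := by omega
  have hi21 : 1 ≤ i₂ := by omega
  have hi2d : 1 ≤ i₂ * d := by
    calc 1 = 1 * 1 := by ring
    _ ≤ i₂ * d := Nat.mul_le_mul hi21 hd
  have hB2 : 1 < B := by omega
  have hGA : Gam n r m₁ d A := gam_gen hn hr₁ hrn i₁ (by omega) hg1
  have hGB : Gam n r m₁ d B := gam_gen hn hr₁ hrn i₂ (by omega) hg2
  refine ⟨A * B, fun x hx => ?_⟩
  rcases Nat.lt_or_ge A 2 with hA2 | hA2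
  · have hA1' : A = 1 := by omega
    have := gam_mul hn hr₁ hrn x hGA
    rwa [hA1', mul_one] at this
  · have hmem : x ∈ AddSubmonoid.closure ({A, B} : Set ℕ) := by
      by_contra hxc
      have hub := (frobeniusNumber_pair hcop hA2 hB2).2 hxc
      have hab : A + B ≤ A * B := Nat.add_le_mul hA2 hB2
      omega
    rw [AddSubmonoid.mem_closure_pair] at hmem
    obtain ⟨u, v, huv⟩ := hmem
    have := gam_add hn hr₁ hrn (gam_mul hn hr₁ hrn u hGA) (gam_mul hn hr₁ hrn v hGB)
    simp only [smul_eq_mul] at huv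
    rwa [huv] at this

/-- the Apéry set of `D = m₁ + (n-1)d` in `Γ`. -/
def Ap (n r m₁ d : ℕ) : Set ℕ :=
  {x | Gam n r m₁ d x ∧ (x < m₁ + (n-1)*d ∨ ¬ Gam n r m₁ d (x - (m₁ + (n-1)*d)))}

include hm₁ hd hgcd in
lemma ap_card : (Ap n r m₁ d).Finite ∧ (Ap n r m₁ d).ncard = m₁ + (n-1)*d := by
  set D := m₁ + (n-1)*d with hD
  have hD0 : 0 < D := by omega
  obtain ⟨N, hN⟩ := gam_large hn hm₁ hd hgcd hr₁ hrn
  have hGD : Gam n r m₁ d D := gam_D hn hr₁ hrn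
  -- key: minimal elements in each residue class
  have hmaps : Set.MapsTo (· % D) (Ap n r m₁ d) (Set.Iio D) :=
    fun x _ => Set.mem_Iio.mpr (Nat.mod_lt x hD0)
  have hmono : ∀ x y, x ∈ Ap n r m₁ d → y ∈ Ap n r m₁ d → x ≤ y → x % D = y % D → x = y := by
    intro x y hx hy hxy hmod
    by_contra hne
    have hdvd : D ∣ y - x := (Nat.modEq_iff_dvd' hxy).mp hmod
    obtain ⟨t, ht⟩ := hdvd
    have ht1 : 1 ≤ t := by
      rcases Nat.eq_zero_or_pos t with h | h
      · subst h; simp at ht; exfalso; apply hne; omega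
      · exact h
    have hyD : D ≤ y := by
      have : D * 1 ≤ D * t := Nat.mul_le_mul_left D ht1
      omega
    have hyG : Gam n r m₁ d (y - D) := by
      have : y - D = x + D * (t - 1) := by
        have e : D * t = D * (t-1) + D := by
          obtain ⟨t', rfl⟩ : ∃ t', t = t' + 1 := ⟨t - 1, by omega⟩
          simp; ring
        omega
      rw [this]
      exact gam_add hn hr₁ hrn hx.1
        (by rw [mul_comm]; exact gam_mul hn hr₁ hrn _ hGD)
    rcases hy.2 with h | h
    · omega
    · exact h hyG
  have hinj : Set.InjOn (· % D) (Ap n r m₁ d) := by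
    intro x hx y hy hmod
    rcases le_or_gt x y with h | h
    · exact hmono x y hx hy h hmod
    · exact (hmono y x hy hx (by omega) hmod.symm).symm
  have hsurj : Set.SurjOn (· % D) (Ap n r m₁ d) (Set.Iio D) := by
    intro c hc
    rw [Set.mem_Iio] at hc
    set S := {x | Gam n r m₁ d x ∧ x % D = c} with hS
    have hne : S.Nonempty := by
      refine ⟨c + N * D, hN _ (by nlinarith), ?_⟩
      simp [Nat.add_mul_mod_self_right, Nat.mod_eq_of_lt hc]
    have hw := Nat.sInf_mem hne
    set w := sInf S with hw'
    refine ⟨w, ⟨hw.1, ?_⟩, hw.2⟩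
    by_contra hcon
    push_neg at hcon
    obtain ⟨hwD, hwG⟩ := hcon
    have hwS : w - D ∈ S := by
      refine ⟨hwG, ?_⟩
      have : w - D + D = w := by omega
      calc (w - D) % D = (w - D + D) % D := (Nat.add_mod_right _ _).symm
        _ = c := by rw [this]; exact hw.2
    have := Nat.sInf_le hwS
    omega
  have hfin : (Ap n r m₁ d).Finite := by
    apply Set.Finite.of_finite_image _ hinj
    exact Set.Finite.subset (Set.finite_Iio D) (Set.image_subset_iff.mpr hmaps)
  constructor
  · exact hfin
  · have himg : (· % D) '' (Ap n r m₁ d) = Set.Iio D :=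
      subset_antisymm (hmaps.image_subset) hsurj
    calc (Ap n r m₁ d).ncard = ((· % D) '' (Ap n r m₁ d)).ncard :=
          (Set.ncard_image_of_injOn hinj).symm
      _ = (Set.Iio D).ncard := by rw [himg]
      _ = D := by rw [← Finset.coe_Iio, Set.ncard_coe_finset, Nat.card_Iio]


include hm₁ hd hgcd in
lemma badMain {x : ℕ} (hx : Gam n r m₁ d x) (hDx : m₁ + (n-1)*d ≤ x)
    (hy : Gam n r m₁ d (x - (m₁ + (n-1)*d)))
    (hbad : ¬ (ordG n r m₁ d (x - (m₁ + (n-1)*d)) < ordG n r m₁ d x)) :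
    m₁ < r ∧ r + 1 ≠ n ∧ x ≤ 2*(m₁ + (n-1)*d) + 2*d := by
  set D := m₁ + (n-1)*d with hD
  set y := x - D with hyd
  set k := ordG n r m₁ d x with hk
  set j := ordG n r m₁ d y with hj
  push_neg at hbad
  obtain ⟨s, ⟨hsb, hse⟩, hxe⟩ := gam_ord_mem hx
  obtain ⟨σ, ⟨hσb, hσe⟩, hye⟩ := gam_ord_mem hy
  rw [← hk] at hxe hsb hse
  rw [← hj] at hye hσb hσe
  have hk1 : 1 ≤ k := by
    by_contra h
    have hk0 : k = 0 := by omega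
    rw [hk0] at hxe hsb
    have hs0 : s = 0 := by omega
    rw [hs0] at hxe
    omega
  have heq : j*m₁ + σ*d + (m₁ + (n-1)*d) = k*m₁ + s*d := by omega
  rcases le_or_gt s (n-2) with hs2 | hs2
  · -- impossible: s too small
    exfalso
    have h1 : s*d ≤ (n-2)*d := Nat.mul_le_mul_right d hs2
    have h2 : k*m₁ ≤ j*m₁ := Nat.mul_le_mul_right m₁ hbad
    have h3 : (n-1)*d = (n-2)*d + d := by
      have e : n - 1 = (n-2) + 1 := by omega
      rw [e]; ring
    omega
  · set u := s - (n-1) with hu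
    have hsu : s = u + (n-1) := by omega
    have e1 : (k-1)*m₁ = k*m₁ - m₁ := Nat.sub_one_mul k m₁
    have e2 : (k-1)*(n-1) = k*(n-1) - (n-1) := Nat.sub_one_mul k (n-1)
    have l1 : m₁ ≤ k*m₁ := Nat.le_mul_of_pos_left m₁ (by omega)
    have l2 : (n-1) ≤ k*(n-1) := Nat.le_mul_of_pos_left (n-1) (by omega)
    have e3 : s*d = u*d + (n-1)*d := by
      have e : s*d = (u + (n-1))*d := by rw [← hsu]
      rw [e]; ring
    have hrep : y = (k-1)*m₁ + u*d := by omega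
    have hnts : ¬ TS n r (k-1) u := by
      intro hts
      have := ord_le ⟨u, hts, hrep⟩
      omega
    have hub : u ≤ (k-1)*(n-1) := by omega
    have hexcl : Excl n r (k-1) u := by
      by_contra h
      exact hnts ⟨hub, h⟩
    rcases hexcl with ⟨h1, h2⟩ | ⟨h1, h2⟩ | ⟨h1, h2⟩
    · -- r = 2, u = 1
      have e4 : u*d = d := by rw [h2]; ring
      have hyj : j*m₁ + σ*d = (k-1)*m₁ + d := by omega
      have hkj : k*m₁ ≤ j*m₁ := Nat.mul_le_mul_right m₁ hbad
      have hσ0 : σ = 0 := by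
        by_contra h
        have : d ≤ σ*d := Nat.le_mul_of_pos_left d (by omega)
        omega
      have e6 : σ*d = 0 := by rw [hσ0]; ring
      have hd2 : (j - (k-1))*m₁ = d := by
        have e5 : (j-(k-1))*m₁ = j*m₁ - (k-1)*m₁ := Nat.sub_mul j (k-1) m₁
        have l3 : (k-1)*m₁ ≤ j*m₁ := Nat.mul_le_mul_right m₁ (by omega)
        omega
      have hm1d : m₁ ∣ d := ⟨_, by rw [← hd2]; ring⟩
      have hm11 : m₁ = 1 := by
        have h0 := Nat.dvd_gcd (dvd_refl m₁) hm1d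
        rw [hgcd] at h0
        exact Nat.dvd_one.mp h0
      have hjkd : j = k - 1 + d := by
        have e7 : (j-(k-1))*m₁ = j - (k-1) := by rw [hm11]; ring
        omega
      by_cases hkd : k ≤ d + 1
      · refine ⟨by omega, by omega, ?_⟩
        have l4 : (k-1)*m₁ ≤ d := by
          have : (k-1)*m₁ ≤ d*1 := Nat.mul_le_mul (by omega) (by omega)
          omega
        omega
      · exfalso
        have hge : 1 ≤ k - 1 - d := by omega
        have hts : TS n r (k-1-d) 2 := by
          constructor
          · have : 1*(n-1) ≤ (k-1-d)*(n-1) := Nat.mul_le_mul_right (n-1) hge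
            omega
          · rintro (⟨g1,g2⟩ | ⟨g1,g2⟩ | ⟨g1,g2⟩) <;> omega
        have hyy : y = (k-1-d)*m₁ + 2*d := by
          have e7 : (k-1-d)*m₁ = k-1-d := by rw [hm11]; ring
          have e8 : (k-1)*m₁ = k-1 := by rw [hm11]; ring
          omega
        have hord := ord_le ⟨2, hts, hyy⟩
        omega
    · exfalso
      exact hse (Or.inr (Or.inl ⟨h1, by omega⟩))
    · have hk2 : k = 2 := by omega
      by_cases hrn' : r + 1 = n
      · exfalso
        apply hse
        right; left
        refine ⟨hrn', ?_⟩
        have e9 : k*(n-1) = 2*(n-1) := by rw [hk2]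
        omega
      · have hyj : j*m₁ + σ*d = m₁ + u*d := by
          have e9 : (k-1)*m₁ = 1*m₁ := by rw [h1]
          omega
        have hj2 : 2 ≤ j := by omega
        have h2m : 2*m₁ ≤ j*m₁ := Nat.mul_le_mul_right m₁ hj2
        have hσu : σ < u := by
          by_contra h
          push_neg at h
          have : u*d ≤ σ*d := Nat.mul_le_mul_right d h
          omega
        have l5 : σ*d ≤ u*d := Nat.mul_le_mul_right d (by omega)
        have hw : (j-1)*m₁ = (u - σ)*d := by
          have e10 : (j-1)*m₁ = j*m₁ - m₁ := Nat.sub_one_mul j m₁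
          have e11 : (u-σ)*d = u*d - σ*d := Nat.sub_mul u σ d
          omega
        have hdvd : m₁ ∣ (u - σ) := by
          have hh : m₁ ∣ (u-σ)*d := ⟨j-1, by rw [← hw]; ring⟩
          exact Nat.Coprime.dvd_of_dvd_mul_right hgcd hh
        have hle : m₁ ≤ u - σ := Nat.le_of_dvd (by omega) hdvd
        refine ⟨by omega, hrn', ?_⟩
        have l6 : u*d ≤ (n-2)*d := Nat.mul_le_mul_right d (by omega)
        have h3 : (n-1)*d = (n-2)*d + d := by
          have e : n-1 = (n-2)+1 := by omega
          rw [e]; ring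
        omega

include hm₁ hd hgcd in
lemma exists_bad (hcr1 : m₁ < r) (hcr2 : r + 1 ≠ n) :
    ∃ y, Gam n r m₁ d y ∧
      ordG n r m₁ d (y + (m₁ + (n-1)*d)) ≤ ordG n r m₁ d y := by
  set D := m₁ + (n-1)*d with hD
  refine ⟨m₁ + (r-1)*d, ?_, ?_⟩
  · refine ⟨1+d, r-1-m₁, ⟨?_, ?_⟩, ?_⟩
    · have : 1*(n-1) ≤ (1+d)*(n-1) := Nat.mul_le_mul_right (n-1) (by omega)
      omega
    · rintro (⟨g1,g2⟩ | ⟨g1,g2⟩ | ⟨g1,g2⟩) <;> omega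
    · have e1 : (1+d)*m₁ = m₁ + d*m₁ := by ring
      have e2 : (r-1-m₁)*d = (r-1)*d - m₁*d := Nat.sub_mul (r-1) m₁ d
      have e3 : m₁*d ≤ (r-1)*d := Nat.mul_le_mul_right d (by omega)
      have e4 : d*m₁ = m₁*d := by ring
      omega
  · have hy : Gam n r m₁ d (m₁ + (r-1)*d) := by
      refine ⟨1+d, r-1-m₁, ⟨?_, ?_⟩, ?_⟩
      · have : 1*(n-1) ≤ (1+d)*(n-1) := Nat.mul_le_mul_right (n-1) (by omega)
        omega
      · rintro (⟨g1,g2⟩ | ⟨g1,g2⟩ | ⟨g1,g2⟩) <;> omega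
      · have e1 : (1+d)*m₁ = m₁ + d*m₁ := by ring
        have e2 : (r-1-m₁)*d = (r-1)*d - m₁*d := Nat.sub_mul (r-1) m₁ d
        have e3 : m₁*d ≤ (r-1)*d := Nat.mul_le_mul_right d (by omega)
        have e4 : d*m₁ = m₁*d := by ring
        omega
    have h2 : ordG n r m₁ d (m₁ + (r-1)*d + D) ≤ 2 := by
      apply ord_le
      refine ⟨(r-1)+(n-1), ⟨by omega, ?_⟩, ?_⟩
      · rintro (⟨g1,g2⟩ | ⟨g1,g2⟩ | ⟨g1,g2⟩) <;> omega
      · have e : ((r-1)+(n-1))*d = (r-1)*d + (n-1)*d := by ring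
        omega
    have h3 : 2 ≤ ordG n r m₁ d (m₁ + (r-1)*d) := by
      by_contra hcon
      push_neg at hcon
      obtain ⟨s, ⟨hb, he⟩, heq⟩ := gam_ord_mem hy
      have ho : ordG n r m₁ d (m₁ + (r-1)*d) = 0 ∨ ordG n r m₁ d (m₁ + (r-1)*d) = 1 := by
        omega
      rcases ho with ho | ho <;> rw [ho] at hb he heq
      · have hs0 : s = 0 := by omega
        rw [hs0] at heq
        omega
      · have hs : s = r - 1 := by
          have : s * d = (r-1) * d := by omega
          exact Nat.eq_of_mul_eq_mul_right hd this
        exact he (Or.inr (Or.inr ⟨rfl, by omega⟩))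
    omega

end gamma

def Xset (n r m₁ d : ℕ) : Set ℕ :=
  {x | Gam n r m₁ d x ∧ ¬((m₁ + (n-1)*d) ≤ x ∧ Gam n r m₁ d (x - (m₁ + (n-1)*d)) ∧
      ordG n r m₁ d (x - (m₁ + (n-1)*d)) < ordG n r m₁ d x)}

section bridge
variable {n m₁ d : ℕ} (hn : 4 ≤ n) (hm₁ : 0 < m₁) (hd : 0 < d)
    (m : ℕ → ℕ) (hm : ∀ i, m i = m₁ + (i - 1) * d)
    (a : ℕ → ℕ × ℕ)
    (ha : ∀ i, a i = if i = n + 1 then (0, m n) else (m i, m n - m i))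
    {r : ℕ} (hr₁ : 2 ≤ r) (hrn : r + 1 ≤ n)
    (P : AddSubmonoid (ℕ × ℕ))
    (hP : P = AddSubmonoid.closure (a '' (Set.Icc 1 (n + 1) \ {r})))
    (P0 : Set (ℕ × ℕ))
    (hP0 : P0 = {s | s ∈ P ∧
      (¬ ∃ t ∈ P, ((t.1 : ℤ), (t.2 : ℤ)) =
        ((s.1 : ℤ) - ((a n).1 : ℤ), (s.2 : ℤ) - ((a n).2 : ℤ))) ∧
      (¬ ∃ t ∈ P, ((t.1 : ℤ), (t.2 : ℤ)) =
        ((s.1 : ℤ) - ((a (n + 1)).1 : ℤ), (s.2 : ℤ) - ((a (n + 1)).2 : ℤ)))})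

include hn hm₁ hd hm ha hr₁ hrn hP hP0

lemma P0_char :
    P0 = (fun x => (x, ordG n r m₁ d x * (m₁ + (n-1)*d) - x)) '' Xset n r m₁ d := by
  set D := m₁ + (n-1)*d with hD
  have hD0 : 0 < D := by omega
  have hmn : m n = D := by rw [hm]
  have ha1n : ((a n).1 : ℕ) = D := by rw [ha n, if_neg (by omega)]; simpa using hmn
  have ha2n : ((a n).2 : ℕ) = 0 := by rw [ha n, if_neg (by omega)]; simp
  have ha1n1 : ((a (n+1)).1 : ℕ) = 0 := by rw [ha (n+1), if_pos rfl]
  have ha2n1 : ((a (n+1)).2 : ℕ) = D := by rw [ha (n+1), if_pos rfl]; simpa using hmn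
  have hmemP := memP_s14 hn m hm a ha hr₁ hrn P hP
  have hPm : ∀ v : ℕ × ℕ, v ∈ P ↔ ∃ k, (∃ j, j ≤ k ∧ GamJ n r m₁ d v.1 j) ∧ v.1 + v.2 = k*D := by
    intro v
    rw [hmemP v]
    constructor
    · rintro ⟨k, j, s, hjk, hts, hx, hsum⟩
      exact ⟨k, ⟨j, hjk, s, hts, hx⟩, hsum⟩
    · rintro ⟨k, ⟨j, hjk, s, hts, hx⟩, hsum⟩
      exact ⟨k, j, s, hjk, hts, hx, hsum⟩
  -- translate the two integer conditions
  have hpos1 : ∀ v : ℕ × ℕ,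
      (∃ t ∈ P, ((t.1 : ℤ), (t.2 : ℤ)) =
        ((v.1 : ℤ) - ((a n).1 : ℤ), (v.2 : ℤ) - ((a n).2 : ℤ)))
      ↔ (D ≤ v.1 ∧ ((v.1 - D, v.2) : ℕ × ℕ) ∈ P) := by
    intro v
    rw [ha1n, ha2n]
    constructor
    · rintro ⟨t, htP, heq⟩
      rw [Prod.mk.injEq] at heq
      obtain ⟨he1, he2⟩ := heq
      have h1 : D ≤ v.1 := by omega
      have h2 : t.1 = v.1 - D := by omega
      have h3 : t.2 = v.2 := by omega
      have ht : t = (v.1 - D, v.2) := Prod.ext h2 h3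
      rw [ht] at htP
      exact ⟨h1, htP⟩
    · rintro ⟨h1, h2⟩
      refine ⟨(v.1 - D, v.2), h2, ?_⟩
      rw [Prod.mk.injEq]
      constructor
      · push_cast; omega
      · push_cast; omega
  have hpos2 : ∀ v : ℕ × ℕ,
      (∃ t ∈ P, ((t.1 : ℤ), (t.2 : ℤ)) =
        ((v.1 : ℤ) - ((a (n+1)).1 : ℤ), (v.2 : ℤ) - ((a (n+1)).2 : ℤ)))
      ↔ (D ≤ v.2 ∧ ((v.1, v.2 - D) : ℕ × ℕ) ∈ P) := by
    intro v
    rw [ha1n1, ha2n1]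
    constructor
    · rintro ⟨t, htP, heq⟩
      rw [Prod.mk.injEq] at heq
      obtain ⟨he1, he2⟩ := heq
      have h1 : D ≤ v.2 := by omega
      have h2 : t.1 = v.1 := by omega
      have h3 : t.2 = v.2 - D := by omega
      have ht : t = (v.1, v.2 - D) := Prod.ext h2 h3
      rw [ht] at htP
      exact ⟨h1, htP⟩
    · rintro ⟨h1, h2⟩
      refine ⟨(v.1, v.2 - D), h2, ?_⟩
      rw [Prod.mk.injEq]
      constructor
      · push_cast; omega
      · push_cast; omega
  have hDmul : ∀ k : ℕ, 1 ≤ k → (k-1)*D = k*D - D ∧ D ≤ k*D := by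
    intro k hk
    constructor
    · exact Nat.sub_one_mul k D
    · exact Nat.le_mul_of_pos_left D (by omega)
  rw [hP0]
  ext v
  simp only [Set.mem_setOf_eq, Set.mem_image, Xset]
  rw [hpos1 v, hpos2 v, hPm v]
  constructor
  · rintro ⟨⟨k, ⟨j, hjk, hgj⟩, hsum⟩, hc1, hc2⟩
    have hgam : Gam n r m₁ d v.1 := ⟨j, hgj⟩
    have hordle : ordG n r m₁ d v.1 ≤ k := le_trans (ord_le hgj) hjk
    have hordge : k ≤ ordG n r m₁ d v.1 := by
      by_contra hcon
      push_neg at hcon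
      have hk1 : 1 ≤ k := by omega
      obtain ⟨e1, e2⟩ := hDmul k hk1
      have hxle : v.1 ≤ (k-1)*D := by
        have := gamJ_le (gam_ord_mem hgam)
        have h2 : (ordG n r m₁ d v.1) * D ≤ (k-1)*D :=
          Nat.mul_le_mul_right D (by omega)
        rw [← hD] at this
        omega
      apply hc2
      refine ⟨by omega, ?_⟩
      rw [hPm]
      refine ⟨k-1, ⟨ordG n r m₁ d v.1, by omega, gam_ord_mem hgam⟩, ?_⟩
      simp only
      omega
    have hkord : k = ordG n r m₁ d v.1 := by omega
    refine ⟨v.1, ⟨hgam, ?_⟩, ?_⟩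
    · rintro ⟨hDle, hgy, hlt⟩
      rw [← hD] at hgy hlt
      apply hc1
      refine ⟨by omega, ?_⟩
      rw [hPm]
      have hk1 : 1 ≤ k := by
        by_contra hk0
        have : k = 0 := by omega
        subst this
        have := gamJ_le hgj
        have : j = 0 := by omega
        omega
      obtain ⟨e1, e2⟩ := hDmul k hk1
      refine ⟨k-1, ⟨ordG n r m₁ d (v.1 - D), by omega, gam_ord_mem hgy⟩, ?_⟩
      simp only
      omega
    · have hvle : v.1 ≤ k*D := by omega
      refine Prod.ext rfl ?_
      simp only
      rw [← hkord]
      omega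
  · rintro ⟨x, ⟨hgam, hX⟩, rfl⟩
    rw [← hD] at hX
    set k := ordG n r m₁ d x with hk
    have hgj := gam_ord_mem hgam
    rw [← hk] at hgj
    have hxle : x ≤ k*D := by
      have := gamJ_le hgj
      rw [← hD] at this
      exact this
    refine ⟨?_, ?_, ?_⟩
    · refine ⟨k, ⟨k, le_rfl, hgj⟩, ?_⟩
      simp only
      omega
    · rintro ⟨hDle, hmem⟩
      rw [hPm] at hmem
      obtain ⟨k', ⟨j', hj'k, hgj'⟩, hsum'⟩ := hmem
      simp only at hsum' hDle
      have hgy : Gam n r m₁ d (x - D) := ⟨j', hgj'⟩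
      have hk'k : k' < k := by
        have h1 : k'*D + D = k*D := by omega
        by_contra hge
        push_neg at hge
        have : k*D ≤ k'*D := Nat.mul_le_mul_right D hge
        omega
      apply hX
      refine ⟨hDle, hgy, ?_⟩
      calc ordG n r m₁ d (x - D) ≤ j' := ord_le hgj'
        _ ≤ k' := hj'k
        _ < k := hk'k
    · rintro ⟨hDle, hmem⟩
      rw [hPm] at hmem
      obtain ⟨k', ⟨j', hj'k, hgj'⟩, hsum'⟩ := hmem
      simp only at hsum' hDle
      have hk'k : k' < k := by
        have h1 : k'*D + D = k*D := by omega
        by_contra hge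
        push_neg at hge
        have : k*D ≤ k'*D := Nat.mul_le_mul_right D hge
        omega
      have : k ≤ k' := le_trans (ord_le hgj') hj'k
      omega

end bridge

/-- For `r ∈ {2,…,n-1}`, the finite set
`(P_r)₀ = {s ∈ P_r : s - a_n ∉ P_r and s - a_{n+1} ∉ P_r}` has exactly `m_n` elements
if and only if `r ≤ m_1` or `r = n-1` (the Cohen–Macaulayness criterion for `K[P_r]`). -/
theorem stmt_14 (n m₁ d : ℕ) (hn : 4 ≤ n) (hm₁ : 0 < m₁) (hd : 0 < d)
    (hgcd : Nat.gcd m₁ d = 1)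
    (m : ℕ → ℕ) (hm : ∀ i, m i = m₁ + (i - 1) * d)
    (a : ℕ → ℕ × ℕ)
    (ha : ∀ i, a i = if i = n + 1 then (0, m n) else (m i, m n - m i))
    (r : ℕ) (hr₁ : 2 ≤ r) (hr₂ : r ≤ n - 1)
    (P : AddSubmonoid (ℕ × ℕ))
    (hP : P = AddSubmonoid.closure (a '' (Set.Icc 1 (n + 1) \ {r})))
    (P0 : Set (ℕ × ℕ))
    (hP0 : P0 = {s | s ∈ P ∧
      (¬ ∃ t ∈ P, ((t.1 : ℤ), (t.2 : ℤ)) =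
        ((s.1 : ℤ) - ((a n).1 : ℤ), (s.2 : ℤ) - ((a n).2 : ℤ))) ∧
      (¬ ∃ t ∈ P, ((t.1 : ℤ), (t.2 : ℤ)) =
        ((s.1 : ℤ) - ((a (n + 1)).1 : ℤ), (s.2 : ℤ) - ((a (n + 1)).2 : ℤ)))}) :
    P0.Finite ∧ (P0.ncard = m n ↔ (r ≤ m₁ ∨ r = n - 1)) := by
  have hrn : r + 1 ≤ n := by omega
  have hmn : m n = m₁ + (n-1)*d := by rw [hm]
  have hchar := P0_char hn hm₁ hd m hm a ha hr₁ hrn P hP P0 hP0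
  have hinj : Function.Injective (fun x : ℕ => (x, ordG n r m₁ d x * (m₁ + (n-1)*d) - x)) := by
    intro u w h
    simpa using congrArg Prod.fst h
  have hApfin := (ap_card hn hm₁ hd hgcd hr₁ hrn).1
  have hApcard := (ap_card hn hm₁ hd hgcd hr₁ hrn).2
  have hApX : Ap n r m₁ d ⊆ Xset n r m₁ d := by
    intro x hx
    obtain ⟨hg, hor⟩ := hx
    refine ⟨hg, ?_⟩
    rintro ⟨hle, hgam, -⟩
    rcases hor with h | h
    · omega
    · exact h hgam
  by_cases hcrit : r ≤ m₁ ∨ r + 1 = n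
  · have hXA : Xset n r m₁ d = Ap n r m₁ d := by
      apply subset_antisymm _ hApX
      intro x hx
      obtain ⟨hg, hcond⟩ := hx
      refine ⟨hg, ?_⟩
      by_contra hcon
      push_neg at hcon
      obtain ⟨h1, h2⟩ := hcon
      have hbad : ¬ (ordG n r m₁ d (x - (m₁ + (n-1)*d)) < ordG n r m₁ d x) :=
        fun hlt => hcond ⟨by omega, h2, hlt⟩
      obtain ⟨hc1, hc2, -⟩ := badMain hn hm₁ hd hgcd hr₁ hrn hg (by omega) h2 hbad
      rcases hcrit with h | h <;> omega
    refine ⟨?_, ?_⟩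
    · rw [hchar, hXA]
      exact hApfin.image _
    · rw [hchar, Set.ncard_image_of_injective _ hinj, hXA, hApcard, hmn]
      constructor
      · intro _
        rcases hcrit with h | h
        · exact Or.inl h
        · exact Or.inr (by omega)
      · intro _
        rfl
  · push_neg at hcrit
    obtain ⟨y, hyG, hyord⟩ := exists_bad hn hm₁ hd hgcd hr₁ hrn (by omega) hcrit.2
    have hx₀X : y + (m₁ + (n-1)*d) ∈ Xset n r m₁ d := by
      refine ⟨gam_add hn hr₁ hrn hyG (gam_D hn hr₁ hrn), ?_⟩
      rintro ⟨-, -, hlt⟩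
      rw [Nat.add_sub_cancel] at hlt
      omega
    have hx₀A : y + (m₁ + (n-1)*d) ∉ Ap n r m₁ d := by
      rintro ⟨-, hor⟩
      rcases hor with h | h
      · omega
      · rw [Nat.add_sub_cancel] at h
        exact h hyG
    have hbound : Xset n r m₁ d ⊆ Ap n r m₁ d ∪ Set.Iic (2*(m₁+(n-1)*d) + 2*d) := by
      intro x hx
      obtain ⟨hg, hcond⟩ := hx
      by_cases hc : (m₁+(n-1)*d) ≤ x ∧ Gam n r m₁ d (x - (m₁+(n-1)*d))
      · right
        have hbad : ¬ (ordG n r m₁ d (x - (m₁ + (n-1)*d)) < ordG n r m₁ d x) :=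
          fun hlt => hcond ⟨hc.1, hc.2, hlt⟩
        exact (badMain hn hm₁ hd hgcd hr₁ hrn hg hc.1 hc.2 hbad).2.2
      · left
        refine ⟨hg, ?_⟩
        by_cases hle : m₁+(n-1)*d ≤ x
        · right
          intro hgam
          exact hc ⟨hle, hgam⟩
        · left
          omega
    have hXfin : (Xset n r m₁ d).Finite :=
      Set.Finite.subset (hApfin.union (Set.finite_Iic _)) hbound
    have hsub : insert (y + (m₁ + (n-1)*d)) (Ap n r m₁ d) ⊆ Xset n r m₁ d := by
      intro z hz
      rcases Set.mem_insert_iff.mp hz with h | h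
      · rw [h]
        exact hx₀X
      · exact hApX h
    have hcard : m₁ + (n-1)*d + 1 ≤ (Xset n r m₁ d).ncard := by
      have h1 : (insert (y + (m₁ + (n-1)*d)) (Ap n r m₁ d)).ncard = (Ap n r m₁ d).ncard + 1 :=
        Set.ncard_insert_of_notMem hx₀A hApfin
      have h2 : (insert (y + (m₁ + (n-1)*d)) (Ap n r m₁ d)).ncard ≤ (Xset n r m₁ d).ncard :=
        Set.ncard_le_ncard hsub hXfin
      omega
    refine ⟨?_, ?_⟩
    · rw [hchar]
      exact hXfin.image _
    · rw [hchar, Set.ncard_image_of_injective _ hinj, hmn]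
      constructor
      · intro h
        omega
      · intro h
        exfalso
        rcases h with h | h
        · omega
        · omega
end

section
/- Define (P_r)₁ = {s ∈ P_r : s − a_n ∈ P_r, s − a_{n+1} ∈ P_r and s − a_n − a_{n+1} ∉ P_r}. Then: if r = 2 and m_1 = 1, (P_2)₁ = {μ·a_1 + a_2 + a_n + d·a_{n+1} : 0 ≤ μ ≤ d − 1}; and if 3 ≤ r ≤ n − 2 and m_1 < r, (P_r)₁ = {a_r + a_n + d·a_{n+1}}. -/
open Finset

def aF (n m₁ d : ℕ) (i : ℕ) : ℕ × ℕ :=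
  if i = n + 1 then (0, m₁ + (n - 1) * d)
  else (m₁ + (i - 1) * d, (m₁ + (n - 1) * d) - (m₁ + (i - 1) * d))

def PF (n m₁ d r : ℕ) : AddSubmonoid (ℕ × ℕ) :=
  AddSubmonoid.closure (aF n m₁ d '' (Set.Icc 1 (n + 1) \ {r}))

lemma gen_mem (n m₁ d r : ℕ) {i : ℕ} (h1 : 1 ≤ i) (h2 : i ≤ n + 1) (h3 : i ≠ r) :
    aF n m₁ d i ∈ PF n m₁ d r :=
  AddSubmonoid.subset_closure ⟨i, ⟨⟨h1, h2⟩, h3⟩, rfl⟩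

lemma sum_ind (nn j x : ℕ) (hj : j < nn) :
    (∑ e ∈ Finset.range nn, if e = j then x else 0) = x := by
  rw [Finset.sum_ite_eq']
  simp [hj]

lemma sum_ind_w (nn j x : ℕ) (hj : j < nn) :
    (∑ e ∈ Finset.range nn, e * (if e = j then x else 0)) = j * x := by
  have : ∀ e, e * (if e = j then x else 0) = (if e = j then e * x else 0) := by
    intro e; split <;> simp
  simp_rw [this]
  rw [Finset.sum_ite_eq']
  simp [hj]

lemma aF_lt (n m₁ d : ℕ) {e : ℕ} (he : e < n) :
    aF n m₁ d (e + 1) = (m₁ + e * d, (m₁ + (n - 1) * d) - (m₁ + e * d)) := by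
  have : e + 1 ≠ n + 1 := by omega
  simp [aF, this, show e ≠ n by omega]

lemma mem_of_rep (n m₁ d r : ℕ) (hr : 2 ≤ r) (hrn : r ≤ n - 1) (hn : 4 ≤ n)
    (p : ℕ × ℕ) (c : ℕ → ℕ) (v : ℕ) (hc : c (r - 1) = 0)
    (h1 : p.1 = (∑ e ∈ range n, c e) * m₁ + d * ∑ e ∈ range n, e * c e)
    (h2 : p.1 + p.2 = ((∑ e ∈ range n, c e) + v) * (m₁ + (n - 1) * d)) :
    p ∈ PF n m₁ d r := by
  set M := m₁ + (n - 1) * d with hM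
  set q : ℕ × ℕ := (∑ e ∈ range n, c e • aF n m₁ d (e + 1)) + v • aF n m₁ d (n + 1) with hqdef
  have hmem : q ∈ PF n m₁ d r := by
    have hg : aF n m₁ d (n + 1) ∈ PF n m₁ d r :=
      gen_mem n m₁ d r (by omega) le_rfl (by omega)
    refine add_mem (sum_mem ?_) (nsmul_mem hg v)
    intro e he
    rw [mem_range] at he
    by_cases hce : e = r - 1
    · rw [hce, hc, zero_smul]; exact zero_mem _
    · exact nsmul_mem (gen_mem n m₁ d r (by omega) (by omega) (by omega)) _
  have haux : ∀ e ∈ range n, m₁ + e * d ≤ M := by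
    intro e he; rw [mem_range] at he
    have : e * d ≤ (n - 1) * d := Nat.mul_le_mul_right d (by omega)
    omega
  have hq1 : q.1 = (∑ e ∈ range n, c e) * m₁ + d * ∑ e ∈ range n, e * c e := by
    rw [hqdef]
    simp only [Prod.fst_add, Prod.fst_sum, Prod.smul_fst, smul_eq_mul]
    have h3 : (aF n m₁ d (n + 1)).1 = 0 := by simp [aF]
    rw [h3, mul_zero, add_zero]
    have h4 : ∀ e ∈ range n, c e * (aF n m₁ d (e + 1)).1 = c e * m₁ + d * (e * c e) := by
      intro e he; rw [mem_range] at he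
      rw [aF_lt n m₁ d he]; ring
    rw [Finset.sum_congr rfl h4, Finset.sum_add_distrib, ← Finset.sum_mul, ← Finset.mul_sum]
  have hq12 : q.1 + q.2 = ((∑ e ∈ range n, c e) + v) * M := by
    have hsplit : q.1 + q.2 = (∑ e ∈ range n, c e * ((aF n m₁ d (e + 1)).1 + (aF n m₁ d (e + 1)).2))
        + v * ((aF n m₁ d (n + 1)).1 + (aF n m₁ d (n + 1)).2) := by
      rw [hqdef]
      simp only [Prod.fst_add, Prod.snd_add, Prod.fst_sum, Prod.snd_sum, Prod.smul_fst,
        Prod.smul_snd, smul_eq_mul]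
      simp_rw [mul_add]
      rw [Finset.sum_add_distrib]
      ring
    rw [hsplit]
    have h5 : ∀ e ∈ range n, c e * ((aF n m₁ d (e + 1)).1 + (aF n m₁ d (e + 1)).2) = c e * M := by
      intro e he
      rw [aF_lt n m₁ d (mem_range.mp he)]
      have := haux e he
      simp only []
      congr 1
      omega
    have h6 : (aF n m₁ d (n + 1)).1 + (aF n m₁ d (n + 1)).2 = M := by simp [aF, hM]
    rw [Finset.sum_congr rfl h5, h6, ← Finset.sum_mul, add_mul]
  have hpq : p = q := by
    have hfst : p.1 = q.1 := by rw [h1, hq1]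
    have hsnd : p.2 = q.2 := by
      have e1 : p.1 + p.2 = q.1 + q.2 := by rw [h2, hq12]
      omega
    exact Prod.ext hfst hsnd
  rw [hpq]; exact hmem

lemma memP_char (n m₁ d r : ℕ) (hn : 4 ≤ n) (hr : 2 ≤ r) {s : ℕ × ℕ}
    (hs : s ∈ PF n m₁ d r) :
    ∃ c : ℕ → ℕ, ∃ v : ℕ, c (r - 1) = 0 ∧
      s.1 = (∑ e ∈ range n, c e) * m₁ + d * (∑ e ∈ range n, e * c e) ∧
      s.1 + s.2 = ((∑ e ∈ range n, c e) + v) * (m₁ + (n - 1) * d) := by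
  induction hs using AddSubmonoid.closure_induction with
  | mem g hg =>
    obtain ⟨i, ⟨⟨hi1, hi2⟩, hir⟩, rfl⟩ := hg
    simp only [Set.mem_singleton_iff] at hir
    by_cases hin : i = n + 1
    · refine ⟨fun _ => 0, 1, rfl, ?_, ?_⟩ <;> simp [aF, hin]
    · have hin' : i ≤ n := by omega
      refine ⟨fun e => if e = i - 1 then 1 else 0, 0, ?_, ?_, ?_⟩
      · show (if r - 1 = i - 1 then 1 else 0) = 0
        have hne : r - 1 ≠ i - 1 := by omega
        simp [hne]
      · rw [sum_ind n (i-1) 1 (by omega), sum_ind_w n (i-1) 1 (by omega)]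
        simp only [aF, if_neg hin]
        ring
      · rw [sum_ind n (i-1) 1 (by omega)]
        have hle : m₁ + (i - 1) * d ≤ m₁ + (n - 1) * d := by
          have : (i - 1) * d ≤ (n - 1) * d := Nat.mul_le_mul_right d (by omega)
          omega
        simp only [aF, if_neg hin]
        simp
        omega
  | zero => exact ⟨fun _ => 0, 0, rfl, by simp, by simp⟩
  | add p q hp hq ihp ihq =>
    obtain ⟨c1, v1, hc1, h11, h12⟩ := ihp
    obtain ⟨c2, v2, hc2, h21, h22⟩ := ihq
    refine ⟨fun e => c1 e + c2 e, v1 + v2, ?_, ?_, ?_⟩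
    · show c1 (r - 1) + c2 (r - 1) = 0
      rw [hc1, hc2]
    · have e1 : (∑ e ∈ range n, (c1 e + c2 e)) = (∑ e ∈ range n, c1 e) + ∑ e ∈ range n, c2 e :=
        Finset.sum_add_distrib
      have e2 : (∑ e ∈ range n, e * (c1 e + c2 e))
          = (∑ e ∈ range n, e * c1 e) + ∑ e ∈ range n, e * c2 e := by
        simp_rw [mul_add]; exact Finset.sum_add_distrib
      simp only [Prod.fst_add, e1, e2, h11, h21]
      ring
    · have e1 : (∑ e ∈ range n, (c1 e + c2 e)) = (∑ e ∈ range n, c1 e) + ∑ e ∈ range n, c2 e :=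
        Finset.sum_add_distrib
      simp only [Prod.fst_add, Prod.snd_add, e1]
      have : p.1 + q.1 + (p.2 + q.2) = (p.1 + p.2) + (q.1 + q.2) := by ring
      rw [this, h12, h22]
      ring

lemma no_E_one (n : ℕ) (c : ℕ → ℕ) (hc : c 1 = 0) :
    (∑ e ∈ range n, e * c e) ≠ 1 := by
  intro h
  by_cases hall : ∀ e ∈ range n, e * c e = 0
  · rw [Finset.sum_eq_zero hall] at h; omega
  · push_neg at hall
    obtain ⟨e₀, he₀, hne⟩ := hall
    have h2 : 2 ≤ e₀ * c e₀ := by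
      have hc0 : c e₀ ≠ 0 := by intro h0; rw [h0, mul_zero] at hne; exact hne rfl
      have he00 : e₀ ≠ 0 := by intro h0; rw [h0, zero_mul] at hne; exact hne rfl
      have he01 : e₀ ≠ 1 := by intro h0; rw [h0, hc, mul_zero] at hne; exact hne rfl
      have : 2 * 1 ≤ e₀ * c e₀ := Nat.mul_le_mul (by omega) (by omega)
      omega
    have hle : e₀ * c e₀ ≤ ∑ e ∈ range n, e * c e :=
      Finset.single_le_sum (f := fun e => e * c e) (fun e _ => Nat.zero_le _) he₀
    omega

lemma single_rep (n r : ℕ) (hr : 2 ≤ r) (c : ℕ → ℕ) (hc : c (r - 1) = 0)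
    (h1 : (∑ e ∈ range n, c e) = 1) :
    (∑ e ∈ range n, e * c e) ≠ r - 1 := by
  intro hE
  by_cases hall : ∀ e ∈ range n, c e = 0
  · rw [Finset.sum_eq_zero hall] at h1; omega
  · push_neg at hall
    obtain ⟨e₀, he₀, hne⟩ := hall
    have key : ∀ e ∈ range n, e ≠ e₀ → c e = 0 := by
      intro e he hee
      by_contra hce
      have hsub : ({e₀, e} : Finset ℕ) ⊆ range n := by
        intro z hz; simp only [Finset.mem_insert, Finset.mem_singleton] at hz
        rcases hz with h | h <;> (subst h; assumption)
      have hpair : (∑ z ∈ ({e₀, e} : Finset ℕ), c z) = c e₀ + c e :=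
        Finset.sum_pair (fun h => hee h.symm)
      have : (∑ z ∈ ({e₀, e} : Finset ℕ), c z) ≤ ∑ z ∈ range n, c z :=
        Finset.sum_le_sum_of_subset hsub
      omega
    have hsum1 : (∑ e ∈ range n, c e) = c e₀ := Finset.sum_eq_single_of_mem e₀ he₀ key
    have hsumE : (∑ e ∈ range n, e * c e) = e₀ * c e₀ :=
      Finset.sum_eq_single_of_mem e₀ he₀ (fun e he hee => by rw [key e he hee, mul_zero])
    have hce : c e₀ = 1 := by omega
    rw [hce, mul_one] at hsumE
    have : e₀ = r - 1 := by omega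
    rw [← this] at hc
    omega

lemma quad_sum (nn j1 j2 j3 j4 x1 x2 x3 x4 : ℕ) (h1 : j1 < nn) (h2 : j2 < nn)
    (h3 : j3 < nn) (h4 : j4 < nn) :
    (∑ e ∈ range nn, ((if e = j1 then x1 else 0) + (if e = j2 then x2 else 0)
      + (if e = j3 then x3 else 0) + (if e = j4 then x4 else 0))) = x1 + x2 + x3 + x4 ∧
    (∑ e ∈ range nn, e * ((if e = j1 then x1 else 0) + (if e = j2 then x2 else 0)
      + (if e = j3 then x3 else 0) + (if e = j4 then x4 else 0)))
      = j1 * x1 + j2 * x2 + j3 * x3 + j4 * x4 := by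
  constructor
  · rw [Finset.sum_add_distrib, Finset.sum_add_distrib, Finset.sum_add_distrib,
      sum_ind _ _ _ h1, sum_ind _ _ _ h2, sum_ind _ _ _ h3, sum_ind _ _ _ h4]
  · simp_rw [mul_add]
    rw [Finset.sum_add_distrib, Finset.sum_add_distrib, Finset.sum_add_distrib,
      sum_ind_w _ _ _ h1, sum_ind_w _ _ _ h2, sum_ind_w _ _ _ h3, sum_ind_w _ _ _ h4]

lemma ach_exists (n r u E : ℕ) (hn : 4 ≤ n) (hr : 2 ≤ r) (hrn : r ≤ n - 2)
    (hu : 1 ≤ u) (hE : E ≤ u * (n - 1)) (hexc : ¬(E = r - 1 ∧ (r = 2 ∨ u = 1))) :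
    ∃ c : ℕ → ℕ, c (r - 1) = 0 ∧ (∑ e ∈ range n, c e) = u ∧
      (∑ e ∈ range n, e * c e) = E := by
  obtain ⟨q, ρ, hdm, hρlt⟩ : ∃ q ρ, (n - 1) * q + ρ = E ∧ ρ < n - 1 :=
    ⟨E / (n - 1), E % (n - 1), Nat.div_add_mod E (n - 1), Nat.mod_lt E (by omega)⟩
  by_cases hqu : u ≤ q
  · -- q ≥ u : all weight at n-1, and ρ = 0, q = u
    have h2 : u * (n - 1) ≤ q * (n - 1) := Nat.mul_le_mul_right _ hqu
    have h3 : q * (n - 1) = (n - 1) * q := mul_comm _ _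
    have h4 : u * (n - 1) = (n - 1) * u := mul_comm _ _
    refine ⟨fun e => if e = n - 1 then u else 0, ?_, ?_, ?_⟩
    · show (if r - 1 = n - 1 then u else 0) = 0
      rw [if_neg (by omega)]
    · exact sum_ind n (n - 1) u (by omega)
    · rw [sum_ind_w n (n - 1) u (by omega)]
      omega
  · push_neg at hqu
    by_cases hρr : ρ = r - 1
    · by_cases hq1 : 1 ≤ q
      · -- c = {n-1 ↦ q-1, n-2 ↦ 1, r ↦ 1, 0 ↦ u-q-1}
        refine ⟨fun e => (if e = n - 1 then q - 1 else 0) + (if e = n - 2 then 1 else 0)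
          + (if e = r then 1 else 0) + (if e = 0 then u - q - 1 else 0), ?_, ?_, ?_⟩
        · show (if r - 1 = n - 1 then q - 1 else 0) + (if r - 1 = n - 2 then 1 else 0)
            + (if r - 1 = r then 1 else 0) + (if r - 1 = 0 then u - q - 1 else 0) = 0
          rw [if_neg (by omega), if_neg (by omega), if_neg (by omega), if_neg (by omega)]
        · rw [(quad_sum n (n-1) (n-2) r 0 (q-1) 1 1 (u-q-1) (by omega) (by omega)
            (by omega) (by omega)).1]
          omega
        · rw [(quad_sum n (n-1) (n-2) r 0 (q-1) 1 1 (u-q-1) (by omega) (by omega)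
            (by omega) (by omega)).2]
          have hsplit : (n - 1) * q = (n - 1) * (q - 1) + (n - 1) := by
            have hq : q = (q - 1) + 1 := by omega
            rw [hq, mul_add, mul_one, Nat.add_sub_cancel]
          omega
      · -- q = 0, E = ρ = r - 1, need r ≥ 3 and u ≥ 2
        have hq0 : q = 0 := by omega
        have hdm0 : (n - 1) * q = 0 := by rw [hq0, mul_zero]
        have hEρ : E = r - 1 := by omega
        have hr3 : 3 ≤ r ∧ 2 ≤ u := by
          by_contra hcon
          exact hexc ⟨hEρ, by omega⟩
        refine ⟨fun e => (if e = r - 2 then 1 else 0) + (if e = 1 then 1 else 0)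
          + (if e = 0 then u - 2 else 0) + (if e = 0 then 0 else 0), ?_, ?_, ?_⟩
        · show (if r - 1 = r - 2 then 1 else 0) + (if r - 1 = 1 then 1 else 0)
            + (if r - 1 = 0 then u - 2 else 0) + (if r - 1 = 0 then 0 else 0) = 0
          rw [if_neg (by omega), if_neg (by omega), if_neg (by omega), if_neg (by omega)]
        · rw [(quad_sum n (r-2) 1 0 0 1 1 (u-2) 0 (by omega) (by omega)
            (by omega) (by omega)).1]
          omega
        · rw [(quad_sum n (r-2) 1 0 0 1 1 (u-2) 0 (by omega) (by omega)
            (by omega) (by omega)).2]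
          omega
    · -- ρ ≠ r - 1 : c = {n-1 ↦ q, ρ ↦ 1, 0 ↦ u-q-1}
      refine ⟨fun e => (if e = n - 1 then q else 0) + (if e = ρ then 1 else 0)
        + (if e = 0 then u - q - 1 else 0) + (if e = 0 then 0 else 0), ?_, ?_, ?_⟩
      · show (if r - 1 = n - 1 then q else 0) + (if r - 1 = ρ then 1 else 0)
          + (if r - 1 = 0 then u - q - 1 else 0) + (if r - 1 = 0 then 0 else 0) = 0
        rw [if_neg (by omega), if_neg (by omega), if_neg (by omega), if_neg (by omega)]
      · rw [(quad_sum n (n-1) ρ 0 0 q 1 (u-q-1) 0 (by omega) (by omega)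
          (by omega) (by omega)).1]
        omega
      · rw [(quad_sum n (n-1) ρ 0 0 q 1 (u-q-1) 0 (by omega) (by omega)
          (by omega) (by omega)).2]
        omega

lemma E_le (n : ℕ) (c : ℕ → ℕ) :
    (∑ e ∈ range n, e * c e) ≤ (∑ e ∈ range n, c e) * (n - 1) := by
  calc (∑ e ∈ range n, e * c e) ≤ ∑ e ∈ range n, (n - 1) * c e := by
        refine Finset.sum_le_sum (fun e he => ?_)
        exact Nat.mul_le_mul_right _ (by have := mem_range.mp he; omega)
    _ = (∑ e ∈ range n, c e) * (n - 1) := by rw [← Finset.mul_sum]; ring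

set_option maxHeartbeats 1000000 in
lemma forward_analysis (n m₁ d r : ℕ) (hn : 4 ≤ n) (hm₁ : 0 < m₁) (hd : 0 < d)
    (hgcd : Nat.gcd m₁ d = 1) (hr : 2 ≤ r) (hrn : r ≤ n - 1) (x y : ℕ)
    (hxM : m₁ + (n - 1) * d ≤ x) (hyM : m₁ + (n - 1) * d ≤ y)
    (h2 : (x - (m₁ + (n - 1) * d), y) ∈ PF n m₁ d r)
    (h3 : (x, y - (m₁ + (n - 1) * d)) ∈ PF n m₁ d r)
    (h4 : (x - (m₁ + (n - 1) * d), y - (m₁ + (n - 1) * d)) ∉ PF n m₁ d r) :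
    ∃ c1 : ℕ → ℕ, c1 (r - 1) = 0 ∧
      d + 1 ≤ (∑ e ∈ range n, c1 e) ∧
      x = (m₁ + (n - 1) * d) + (∑ e ∈ range n, c1 e) * m₁ + d * (∑ e ∈ range n, e * c1 e) ∧
      x + y = ((∑ e ∈ range n, c1 e) + 1) * (m₁ + (n - 1) * d) ∧
      m₁ + (∑ e ∈ range n, e * c1 e) ≤ ((∑ e ∈ range n, c1 e) - d) * (n - 1) := by
  have hn1 : 1 ≤ n := by omega
  obtain ⟨c1, v1, hc1, h11, h12⟩ := memP_char n m₁ d r hn hr h2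
  dsimp only at h11 h12
  have hE1le : (∑ e ∈ range n, e * c1 e) ≤ (∑ e ∈ range n, c1 e) * (n - 1) := E_le n c1
  generalize hu1 : (∑ e ∈ range n, c1 e) = u1 at h11 h12 hE1le
  generalize hE1 : (∑ e ∈ range n, e * c1 e) = E1 at h11 h12 hE1le
  have hv1 : v1 = 0 := by
    by_contra hv
    apply h4
    apply mem_of_rep n m₁ d r hr hrn hn _ c1 (v1 - 1) hc1
    · show x - (m₁ + (n - 1) * d) = (∑ e ∈ range n, c1 e) * m₁ + d * ∑ e ∈ range n, e * c1 e
      rw [hu1, hE1]; exact h11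
    · show x - (m₁ + (n - 1) * d) + (y - (m₁ + (n - 1) * d))
        = ((∑ e ∈ range n, c1 e) + (v1 - 1)) * (m₁ + (n - 1) * d)
      rw [hu1]
      have hexp : (u1 + v1) * (m₁ + (n - 1) * d)
          = (u1 + (v1 - 1)) * (m₁ + (n - 1) * d) + (m₁ + (n - 1) * d) := by
        have hv' : u1 + v1 = (u1 + (v1 - 1)) + 1 := by omega
        rw [hv', add_mul, one_mul]
      omega
  rw [hv1] at h12
  obtain ⟨c2, v2, hc2, h21, h22⟩ := memP_char n m₁ d r hn hr h3
  dsimp only at h21 h22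
  have hE2le : (∑ e ∈ range n, e * c2 e) ≤ (∑ e ∈ range n, c2 e) * (n - 1) := E_le n c2
  generalize hu2 : (∑ e ∈ range n, c2 e) = u2 at h21 h22 hE2le
  generalize hE2 : (∑ e ∈ range n, e * c2 e) = E2 at h21 h22 hE2le
  have hMpos : 0 < m₁ + (n - 1) * d := by omega
  have hu2u1 : u2 + v2 = u1 := by
    have e0 : (u1 + 0) * (m₁ + (n - 1) * d) = u1 * (m₁ + (n - 1) * d) := by ring
    have he : (u2 + v2) * (m₁ + (n - 1) * d) = u1 * (m₁ + (n - 1) * d) := by omega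
    exact Nat.eq_of_mul_eq_mul_right hMpos he
  obtain ⟨w, hw⟩ : ∃ w, u2 + w = u1 + 1 := ⟨u1 + 1 - u2, by omega⟩
  have ecomm : d * (n - 1) = (n - 1) * d := mul_comm _ _
  have hkey : d * E2 = w * m₁ + d * E1 + d * (n - 1) := by
    have e1 : (u2 + w) * m₁ = u2 * m₁ + w * m₁ := add_mul _ _ _
    have e2 : (u1 + 1) * m₁ = u1 * m₁ + m₁ := by ring
    rw [hw] at e1
    omega
  obtain ⟨k, hk⟩ : ∃ k, E2 = E1 + (n - 1) + k := by
    refine ⟨E2 - (E1 + (n - 1)), ?_⟩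
    have e4 : d * (E1 + (n - 1)) = d * E1 + d * (n - 1) := by ring
    have hle : d * (E1 + (n - 1)) ≤ d * E2 := by omega
    have := Nat.le_of_mul_le_mul_left hle hd
    omega
  have hwm : w * m₁ = d * k := by
    have e5 : d * E2 = d * E1 + d * (n - 1) + d * k := by rw [hk]; ring
    omega
  have hdw : d ∣ w := by
    have hcop : Nat.Coprime d m₁ := Nat.coprime_comm.mp hgcd
    exact hcop.dvd_of_dvd_mul_right ⟨k, hwm⟩
  have hw1 : 1 ≤ w := by omega
  have hwd : d ≤ w := Nat.le_of_dvd (by omega) hdw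
  -- integer facts
  have F1 : (x : ℤ) = ((m₁ : ℤ) + ((n : ℤ) - 1) * d) + (u1 : ℤ) * m₁ + (d : ℤ) * E1 := by
    have h11' := h11
    zify [hxM, hn1] at h11'
    linarith
  have F2 : (x : ℤ) = (u2 : ℤ) * m₁ + (d : ℤ) * E2 := by exact_mod_cast h21
  have hE2leZ : (E2 : ℤ) ≤ (u2 : ℤ) * ((n : ℤ) - 1) := by
    have h := hE2le
    zify [hn1] at h
    linarith
  have d3 : (u2 : ℤ) ≤ (u1 : ℤ) + 1 - d := by
    have hwZ : (u2 : ℤ) + w = (u1 : ℤ) + 1 := by exact_mod_cast hw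
    have hwdZ : (d : ℤ) ≤ w := by exact_mod_cast hwd
    omega
  have hnZ : (4 : ℤ) ≤ n := by exact_mod_cast hn
  have hm₁Z : (1 : ℤ) ≤ m₁ := by exact_mod_cast hm₁
  have hdZ : (1 : ℤ) ≤ d := by exact_mod_cast hd
  have c3 : (x : ℤ) ≤ ((u1 : ℤ) + 1 - d) * ((m₁ : ℤ) + (d : ℤ) * ((n : ℤ) - 1)) := by
    have d2 : (d : ℤ) * E2 ≤ (d : ℤ) * ((u2 : ℤ) * ((n : ℤ) - 1)) :=
      mul_le_mul_of_nonneg_left hE2leZ (by linarith)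
    have idd : (u2 : ℤ) * ((m₁ : ℤ) + (d : ℤ) * ((n : ℤ) - 1))
        = (u2 : ℤ) * m₁ + (d : ℤ) * ((u2 : ℤ) * ((n : ℤ) - 1)) := by ring
    have d1 : (x : ℤ) ≤ (u2 : ℤ) * ((m₁ : ℤ) + (d : ℤ) * ((n : ℤ) - 1)) := by linarith
    have hMZ : (0 : ℤ) ≤ (m₁ : ℤ) + (d : ℤ) * ((n : ℤ) - 1) := by
      have hnn : (0 : ℤ) ≤ (d : ℤ) * ((n : ℤ) - 1) :=
        mul_nonneg (by linarith) (by linarith)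
      linarith
    exact le_trans d1 (mul_le_mul_of_nonneg_right d3 hMZ)
  have c4 : (d : ℤ) * ((m₁ : ℤ) + E1) ≤ (d : ℤ) * (((u1 : ℤ) - d) * ((n : ℤ) - 1)) := by
    have keyid : (d : ℤ) * (((u1 : ℤ) - d) * ((n : ℤ) - 1)) - (d : ℤ) * ((m₁ : ℤ) + E1)
        = ((u1 : ℤ) + 1 - d) * ((m₁ : ℤ) + (d : ℤ) * ((n : ℤ) - 1))
          - (((m₁ : ℤ) + ((n : ℤ) - 1) * d) + (u1 : ℤ) * m₁ + (d : ℤ) * E1) := by ring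
    linarith [c3, F1]
  have c5 : (m₁ : ℤ) + E1 ≤ ((u1 : ℤ) - d) * ((n : ℤ) - 1) :=
    le_of_mul_le_mul_left c4 (by linarith)
  have c6 : d + 1 ≤ u1 := by
    by_contra hcon
    push_neg at hcon
    have h1' : (u1 : ℤ) ≤ d := by exact_mod_cast Nat.lt_succ_iff.mp hcon
    have h2' : ((u1 : ℤ) - d) * ((n : ℤ) - 1) ≤ 0 :=
      mul_nonpos_of_nonpos_of_nonneg (by omega) (by omega)
    have hE1nn : (0 : ℤ) ≤ (E1 : ℤ) := by positivity
    linarith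
  refine ⟨c1, hc1, ?_, ?_, ?_, ?_⟩
  · rw [hu1]; exact c6
  · rw [hu1, hE1]; omega
  · rw [hu1]
    have e0 : (u1 + 1) * (m₁ + (n - 1) * d)
        = (u1 + 0) * (m₁ + (n - 1) * d) + (m₁ + (n - 1) * d) := by ring
    omega
  · rw [hu1, hE1]
    zify [show d ≤ u1 from by omega, hn1]
    linarith

lemma E_zero (n : ℕ) (c : ℕ → ℕ) (h : ∑ e ∈ range n, c e = 0) :
    ∑ e ∈ range n, e * c e = 0 :=
  Finset.sum_eq_zero (fun e he => by
    have := Finset.sum_eq_zero_iff.mp h e he; simp [this])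

set_option maxHeartbeats 1000000 in
/-- For `r ∈ {2,…,n-1}` define
`(P_r)₁ = {s ∈ P_r : s - a_n ∈ P_r, s - a_{n+1} ∈ P_r, s - a_n - a_{n+1} ∉ P_r}`.
Then: if `r = 2` and `m_1 = 1`,
`(P_2)₁ = {μ·a_1 + a_2 + a_n + d·a_{n+1} : 0 ≤ μ ≤ d-1}` (written `μ < d`); and if
`3 ≤ r ≤ n-2` and `m_1 < r`, `(P_r)₁ = {a_r + a_n + d·a_{n+1}}`. -/
theorem stmt_15 (n m₁ d : ℕ) (hn : 4 ≤ n) (hm₁ : 0 < m₁) (hd : 0 < d)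
    (hgcd : Nat.gcd m₁ d = 1)
    (m : ℕ → ℕ) (hm : ∀ i, m i = m₁ + (i - 1) * d)
    (a : ℕ → ℕ × ℕ)
    (ha : ∀ i, a i = if i = n + 1 then (0, m n) else (m i, m n - m i))
    (r : ℕ) (hr₁ : 2 ≤ r) (hr₂ : r ≤ n - 1)
    (P : AddSubmonoid (ℕ × ℕ))
    (hP : P = AddSubmonoid.closure (a '' (Set.Icc 1 (n + 1) \ {r})))
    (P1 : Set (ℕ × ℕ))
    (hP1 : P1 = {s | s ∈ P ∧
      (∃ t ∈ P, ((t.1 : ℤ), (t.2 : ℤ)) =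
        ((s.1 : ℤ) - ((a n).1 : ℤ), (s.2 : ℤ) - ((a n).2 : ℤ))) ∧
      (∃ t ∈ P, ((t.1 : ℤ), (t.2 : ℤ)) =
        ((s.1 : ℤ) - ((a (n + 1)).1 : ℤ), (s.2 : ℤ) - ((a (n + 1)).2 : ℤ))) ∧
      (¬ ∃ t ∈ P, ((t.1 : ℤ), (t.2 : ℤ)) =
        ((s.1 : ℤ) - ((a n).1 : ℤ) - ((a (n + 1)).1 : ℤ),
         (s.2 : ℤ) - ((a n).2 : ℤ) - ((a (n + 1)).2 : ℤ)))}) :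
    ((r = 2 ∧ m₁ = 1) →
      P1 = {x | ∃ μ : ℕ, μ < d ∧ x = μ • a 1 + a 2 + a n + d • a (n + 1)}) ∧
    ((3 ≤ r ∧ r ≤ n - 2 ∧ m₁ < r) →
      P1 = {a r + a n + d • a (n + 1)}) := by
  have ham : a = aF n m₁ d := by
    funext i
    rw [ha i, hm i, hm n]
    rfl
  subst ham
  subst hP
  subst hP1
  have hnn1 : n ≠ n + 1 := by omega
  have han : aF n m₁ d n = (m₁ + (n - 1) * d, 0) := by
    simp [aF, hnn1]
  have han1 : aF n m₁ d (n + 1) = (0, m₁ + (n - 1) * d) := by simp [aF]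
  have hsm : d • aF n m₁ d (n + 1) = (0, d * (m₁ + (n - 1) * d)) := by
    rw [han1, Prod.smul_mk, smul_eq_mul, smul_eq_mul, mul_zero]
  have hMpos : 0 < m₁ + (n - 1) * d := by omega
  constructor
  · -- case r = 2, m₁ = 1
    rintro ⟨hr2, hm11⟩
    subst hr2
    subst hm11
    have hrn1 : (2 : ℕ) ≤ n - 1 := by omega
    have hrn2 : (2 : ℕ) ≤ n - 2 := by omega
    have hd1M : 1 + d ≤ 1 + (n - 1) * d := by
      have : 1 * d ≤ (n - 1) * d := Nat.mul_le_mul_right d (by omega)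
      omega
    have hdM : 1 * (1 + (n - 1) * d) ≤ d * (1 + (n - 1) * d) :=
      Nat.mul_le_mul_right _ (by omega)
    have ha1 : aF n 1 d 1 = (1, (1 + (n - 1) * d) - 1) := by
      simp [aF, show (1 : ℕ) ≠ n + 1 by omega, show n ≠ 0 by omega]
    have ha2 : aF n 1 d 2 = (1 + d, (1 + (n - 1) * d) - (1 + d)) := by
      simp [aF, show (2 : ℕ) ≠ n + 1 by omega]
    have hval : ∀ μ : ℕ, μ • aF n 1 d 1 + aF n 1 d 2 + ((1 + (n - 1) * d : ℕ), (0 : ℕ))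
          + d • ((0 : ℕ), (1 + (n - 1) * d : ℕ))
        = (μ + (1 + d) + (1 + (n - 1) * d),
           μ * ((1 + (n - 1) * d) - 1) + ((1 + (n - 1) * d) - (1 + d))
             + d * (1 + (n - 1) * d)) := by
      intro μ
      simp only [ha1, ha2, Prod.smul_mk, smul_eq_mul]
      rw [Prod.mk.injEq]
      constructor <;> simp <;> omega
    ext s
    obtain ⟨x, y⟩ := s
    simp only [Set.mem_setOf_eq, han, han1, hval]
    constructor
    · rintro ⟨hsP, hcond2, hcond3, hcond4⟩
      obtain ⟨t2, ht2P, ht2eq⟩ := hcond2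
      simp only [Prod.mk.injEq] at ht2eq
      obtain ⟨ht21, ht22⟩ := ht2eq
      have hxM : 1 + (n - 1) * d ≤ x := by omega
      have ht2v : t2 = (x - (1 + (n - 1) * d), y) := Prod.ext (by omega) (by omega)
      rw [ht2v] at ht2P
      obtain ⟨t3, ht3P, ht3eq⟩ := hcond3
      simp only [Prod.mk.injEq] at ht3eq
      obtain ⟨ht31, ht32⟩ := ht3eq
      have hyM : 1 + (n - 1) * d ≤ y := by omega
      have ht3v : t3 = (x, y - (1 + (n - 1) * d)) := Prod.ext (by omega) (by omega)
      rw [ht3v] at ht3P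
      have h4 : (x - (1 + (n - 1) * d), y - (1 + (n - 1) * d)) ∉ PF n 1 d 2 := by
        intro hmem
        exact hcond4 ⟨(x - (1 + (n - 1) * d), y - (1 + (n - 1) * d)), hmem,
          by simp only [Prod.mk.injEq]; constructor <;> (push_cast; omega)⟩
      obtain ⟨c1, hc1, hu1d, hx, hxy, hbound⟩ :=
        forward_analysis n 1 d 2 hn (by omega) hd hgcd (by omega) hrn1 x y hxM hyM ht2P ht3P h4
      set u1 := ∑ e ∈ range n, c1 e with hu1
      set E1 := ∑ e ∈ range n, e * c1 e with hE1
      clear_value u1 E1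
      -- step A : E1 = 0
      by_cases hE10 : E1 = 0
      case neg =>
        exfalso
        apply h4
        obtain ⟨c, hcr, hcs, hcw⟩ := ach_exists n 2 (u1 - d) (1 + E1) hn le_rfl hrn2
          (by omega) hbound (by rintro ⟨hE, -⟩; exact hE10 (by omega))
        apply mem_of_rep n 1 d 2 (by omega) hrn1 hn _ c (d - 1) hcr
        · show x - (1 + (n - 1) * d)
            = (∑ e ∈ range n, c e) * 1 + d * ∑ e ∈ range n, e * c e
          rw [hcs, hcw]
          have b7 : d * (1 + E1) = d * 1 + d * E1 := by ring
          omega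
        · show x - (1 + (n - 1) * d) + (y - (1 + (n - 1) * d))
            = ((∑ e ∈ range n, c e) + (d - 1)) * (1 + (n - 1) * d)
          rw [hcs]
          have b8 : (u1 + 1) * (1 + (n - 1) * d)
              = ((u1 - d) + (d - 1)) * (1 + (n - 1) * d) + 2 * (1 + (n - 1) * d) := by
            rw [show u1 + 1 = ((u1 - d) + (d - 1)) + 2 from by omega, add_mul]
          omega
      case pos =>
      subst hE10
      -- step B : u1 ≤ 2d
      by_cases hu2d : u1 ≤ 2 * d
      case neg =>
        exfalso
        apply h4
        obtain ⟨c, hcr, hcs, hcw⟩ := ach_exists n 2 (u1 - 2 * d) 2 hn le_rfl hrn2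
          (by omega)
          (by calc (2 : ℕ) = 1 * 2 := by ring
                _ ≤ (u1 - 2 * d) * (n - 1) := Nat.mul_le_mul (by omega) (by omega))
          (by rintro ⟨hE, -⟩; omega)
        apply mem_of_rep n 1 d 2 (by omega) hrn1 hn _ c (2 * d - 1) hcr
        · show x - (1 + (n - 1) * d)
            = (∑ e ∈ range n, c e) * 1 + d * ∑ e ∈ range n, e * c e
          rw [hcs, hcw]
          omega
        · show x - (1 + (n - 1) * d) + (y - (1 + (n - 1) * d))
            = ((∑ e ∈ range n, c e) + (2 * d - 1)) * (1 + (n - 1) * d)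
          rw [hcs]
          have b8 : (u1 + 1) * (1 + (n - 1) * d)
              = ((u1 - 2 * d) + (2 * d - 1)) * (1 + (n - 1) * d) + 2 * (1 + (n - 1) * d) := by
            rw [show u1 + 1 = ((u1 - 2 * d) + (2 * d - 1)) + 2 from by omega, add_mul]
          omega
      case pos =>
      obtain ⟨μ, hμ⟩ : ∃ μ, u1 = μ + d + 1 := ⟨u1 - d - 1, by omega⟩
      refine ⟨μ, by omega, ?_⟩
      have bb1 : μ * (((1 + (n - 1) * d) - 1) + 1) = μ * ((1 + (n - 1) * d) - 1) + μ * 1 :=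
        mul_add _ _ _
      rw [show ((1 + (n - 1) * d) - 1) + 1 = 1 + (n - 1) * d from by omega] at bb1
      have bb2 : u1 * (1 + (n - 1) * d)
          = μ * (1 + (n - 1) * d) + d * (1 + (n - 1) * d) + 1 * (1 + (n - 1) * d) := by
        rw [hμ]; ring
      have bb3 : (u1 + 1) * (1 + (n - 1) * d)
          = u1 * (1 + (n - 1) * d) + 1 * (1 + (n - 1) * d) := by ring
      rw [Prod.mk.injEq]
      constructor <;> omega
    · rintro ⟨μ, hμd, hs⟩
      rw [Prod.mk.injEq] at hs
      obtain ⟨hx0, hy0⟩ := hs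
      subst hx0
      subst hy0
      have bb1 : μ * (((1 + (n - 1) * d) - 1) + 1) = μ * ((1 + (n - 1) * d) - 1) + μ * 1 :=
        mul_add _ _ _
      rw [show ((1 + (n - 1) * d) - 1) + 1 = 1 + (n - 1) * d from by omega] at bb1
      have bt : (μ + d + 2) * (1 + (n - 1) * d)
          = μ * (1 + (n - 1) * d) + d * (1 + (n - 1) * d) + 2 * (1 + (n - 1) * d) := by ring
      have htot : (μ + (1 + d) + (1 + (n - 1) * d))
          + (μ * ((1 + (n - 1) * d) - 1) + ((1 + (n - 1) * d) - (1 + d))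
             + d * (1 + (n - 1) * d))
          = (μ + d + 2) * (1 + (n - 1) * d) := by omega
      have hqs := quad_sum n 0 (n - 2) 2 0 μ 1 1 0 (by omega) (by omega) (by omega) (by omega)
      -- membership of s
      have hmem1 : ((μ + (1 + d) + (1 + (n - 1) * d)),
          (μ * ((1 + (n - 1) * d) - 1) + ((1 + (n - 1) * d) - (1 + d))
            + d * (1 + (n - 1) * d))) ∈ PF n 1 d 2 := by
        apply mem_of_rep n 1 d 2 (by omega) hrn1 hn _
          (fun e => (if e = 0 then μ else 0) + (if e = n - 2 then 1 else 0)
            + (if e = 2 then 1 else 0) + (if e = 0 then 0 else 0)) d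
          (by have h1 : (2 : ℕ) - 1 ≠ 0 := by omega
              have h2 : (2 : ℕ) - 1 ≠ n - 2 := by omega
              have h3 : (2 : ℕ) - 1 ≠ 2 := by omega
              simp [h1, h2, h3])
        · show (μ + (1 + d) + (1 + (n - 1) * d)) = _
          rw [hqs.1, hqs.2]
          have bn : d * (0 * μ + (n - 2) * 1 + 2 * 1 + 0 * 0) = d * (n - 1) + d * 1 := by
            rw [show 0 * μ + (n - 2) * 1 + 2 * 1 + 0 * 0 = (n - 1) + 1 from by omega, mul_add]
          have bc : d * (n - 1) = (n - 1) * d := mul_comm _ _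
          omega
        · show _ = _
          rw [hqs.1]
          have bt2 : (μ + 1 + 1 + 0 + d) * (1 + (n - 1) * d)
              = μ * (1 + (n - 1) * d) + d * (1 + (n - 1) * d) + 2 * (1 + (n - 1) * d) := by
            ring
          omega
      refine ⟨hmem1, ?_, ?_, ?_⟩
      · -- s - a_n
        refine ⟨(μ + d + 1,
          μ * ((1 + (n - 1) * d) - 1) + ((1 + (n - 1) * d) - (1 + d))
            + d * (1 + (n - 1) * d)), ?_, ?_⟩
        · have hqs2 := quad_sum n 0 0 0 0 (μ + d + 1) 0 0 0 (by omega) (by omega)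
            (by omega) (by omega)
          apply mem_of_rep n 1 d 2 (by omega) hrn1 hn _
            (fun e => (if e = 0 then μ + d + 1 else 0) + (if e = 0 then 0 else 0)
              + (if e = 0 then 0 else 0) + (if e = 0 then 0 else 0)) 0
            (by have h1 : (2 : ℕ) - 1 ≠ 0 := by omega
                simp [h1])
          · show μ + d + 1 = _
            rw [hqs2.1, hqs2.2]
            omega
          · show _ = _
            rw [hqs2.1]
            have bu : (μ + d + 1 + 0 + 0 + 0 + 0) * (1 + (n - 1) * d)
                = (μ + d + 2) * (1 + (n - 1) * d) - (1 + (n - 1) * d) := by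
              have : (μ + d + 2) * (1 + (n - 1) * d)
                  = (μ + d + 1 + 0 + 0 + 0 + 0) * (1 + (n - 1) * d) + (1 + (n - 1) * d) := by
                ring
              omega
            omega
        · simp only [Prod.mk.injEq]; constructor <;> omega
      · -- s - a_{n+1}
        refine ⟨((μ + (1 + d) + (1 + (n - 1) * d)),
          (μ * ((1 + (n - 1) * d) - 1) + ((1 + (n - 1) * d) - (1 + d))
            + d * (1 + (n - 1) * d)) - (1 + (n - 1) * d)), ?_, ?_⟩
        · apply mem_of_rep n 1 d 2 (by omega) hrn1 hn _
            (fun e => (if e = 0 then μ else 0) + (if e = n - 2 then 1 else 0)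
              + (if e = 2 then 1 else 0) + (if e = 0 then 0 else 0)) (d - 1)
            (by have h1 : (2 : ℕ) - 1 ≠ 0 := by omega
                have h2 : (2 : ℕ) - 1 ≠ n - 2 := by omega
                have h3 : (2 : ℕ) - 1 ≠ 2 := by omega
                simp [h1, h2, h3])
          · show (μ + (1 + d) + (1 + (n - 1) * d)) = _
            rw [hqs.1, hqs.2]
            have bn : d * (0 * μ + (n - 2) * 1 + 2 * 1 + 0 * 0) = d * (n - 1) + d * 1 := by
              rw [show 0 * μ + (n - 2) * 1 + 2 * 1 + 0 * 0 = (n - 1) + 1 from by omega, mul_add]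
            have bc : d * (n - 1) = (n - 1) * d := mul_comm _ _
            omega
          · show _ = _
            rw [hqs.1]
            have bt2 : (μ + 1 + 1 + 0 + (d - 1)) * (1 + (n - 1) * d)
                = μ * (1 + (n - 1) * d) + (d - 1) * (1 + (n - 1) * d)
                  + 2 * (1 + (n - 1) * d) := by ring
            have b3 : (d - 1 + 1) * (1 + (n - 1) * d)
                = (d - 1) * (1 + (n - 1) * d) + 1 * (1 + (n - 1) * d) := add_mul _ _ _
            rw [show d - 1 + 1 = d from by omega, one_mul] at b3
            have bd : d * (1 + (n - 1) * d) = d + d * ((n - 1) * d) := by ring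
            omega
        · simp only [Prod.mk.injEq]; constructor <;> omega
      · -- non-membership
        rintro ⟨t, htP, hteq⟩
        simp only [Prod.mk.injEq] at hteq
        obtain ⟨ht1, ht2⟩ := hteq
        have htv : t = (μ + d + 1,
            (μ * ((1 + (n - 1) * d) - 1) + ((1 + (n - 1) * d) - (1 + d))
              + d * (1 + (n - 1) * d)) - (1 + (n - 1) * d)) := Prod.ext (by omega) (by omega)
        rw [htv] at htP
        obtain ⟨c, v, hc, hh1, hh2⟩ := memP_char n 1 d 2 hn (by omega) htP
        dsimp only at hh1 hh2
        have hcase0 : (∑ e ∈ range n, c e) = 0 → (∑ e ∈ range n, e * c e) = 0 :=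
          fun h => E_zero n c h
        have hne1 : (∑ e ∈ range n, e * c e) ≠ 1 := no_E_one n c hc
        generalize hu : (∑ e ∈ range n, c e) = u at hh1 hh2 hcase0 hne1
        generalize hE : (∑ e ∈ range n, e * c e) = E at hh1 hh2 hcase0 hne1
        have huv : u + v = μ + d := by
          apply Nat.eq_of_mul_eq_mul_right hMpos
          have bmd : (μ + d) * (1 + (n - 1) * d) + 2 * (1 + (n - 1) * d)
              = (μ + d + 2) * (1 + (n - 1) * d) := by ring
          omega
        by_cases hE1 : E = 1
        · exact hne1 hE1
        · have hu0 : u ≠ 0 → E ≠ 0 → False := by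
            intro hu0' hE0'
            have hdE : d * 2 ≤ d * E := Nat.mul_le_mul_left d (by omega)
            omega
          by_cases hE0 : E = 0
          · subst hE0
            omega
          · exact hu0 (fun h => hE0 (hcase0 h)) hE0
  · -- case 3 ≤ r ≤ n - 2, m₁ < r
    rintro ⟨hr3, hrn2, hm₁r⟩
    have hrn1 : r ≤ n - 1 := by omega
    have hMr : m₁ + (r - 1) * d ≤ m₁ + (n - 1) * d := by
      have := Nat.mul_le_mul_right d (show r - 1 ≤ n - 1 by omega); omega
    have hdM : 1 * (m₁ + (n - 1) * d) ≤ d * (m₁ + (n - 1) * d) :=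
      Nat.mul_le_mul_right _ (by omega)
    have har : aF n m₁ d r
        = (m₁ + (r - 1) * d, (m₁ + (n - 1) * d) - (m₁ + (r - 1) * d)) := by
      simp [aF, show r ≠ n + 1 by omega]
    have hsm2 : d • ((0 : ℕ), m₁ + (n - 1) * d) = ((0 : ℕ), d * (m₁ + (n - 1) * d)) := by
      rw [Prod.smul_mk, smul_eq_mul, smul_eq_mul, mul_zero]
    have hsval : aF n m₁ d r + ((m₁ + (n - 1) * d : ℕ), (0 : ℕ))
          + ((0 : ℕ), d * (m₁ + (n - 1) * d))
        = ((m₁ + (r - 1) * d) + (m₁ + (n - 1) * d),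
           ((m₁ + (n - 1) * d) - (m₁ + (r - 1) * d)) + d * (m₁ + (n - 1) * d)) := by
      rw [har]
      simp [Prod.ext_iff]
    ext s
    obtain ⟨x, y⟩ := s
    simp only [Set.mem_setOf_eq, Set.mem_singleton_iff, han, han1, hsm2, hsval]
    constructor
    · rintro ⟨hsP, hcond2, hcond3, hcond4⟩
      -- convert conditions
      obtain ⟨t2, ht2P, ht2eq⟩ := hcond2
      simp only [Prod.mk.injEq] at ht2eq
      obtain ⟨ht21, ht22⟩ := ht2eq
      have hxM : m₁ + (n - 1) * d ≤ x := by omega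
      have ht2v : t2 = (x - (m₁ + (n - 1) * d), y) := Prod.ext (by omega) (by omega)
      rw [ht2v] at ht2P
      obtain ⟨t3, ht3P, ht3eq⟩ := hcond3
      simp only [Prod.mk.injEq] at ht3eq
      obtain ⟨ht31, ht32⟩ := ht3eq
      have hyM : m₁ + (n - 1) * d ≤ y := by omega
      have ht3v : t3 = (x, y - (m₁ + (n - 1) * d)) := Prod.ext (by omega) (by omega)
      rw [ht3v] at ht3P
      have h4 : (x - (m₁ + (n - 1) * d), y - (m₁ + (n - 1) * d)) ∉ PF n m₁ d r := by
        intro hmem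
        exact hcond4 ⟨(x - (m₁ + (n - 1) * d), y - (m₁ + (n - 1) * d)), hmem,
          by simp only [Prod.mk.injEq]; constructor <;> (push_cast; omega)⟩
      obtain ⟨c1, hc1, hu1d, hx, hxy, hbound⟩ :=
        forward_analysis n m₁ d r hn hm₁ hd hgcd hr₁ hrn1 x y hxM hyM ht2P ht3P h4
      set u1 := ∑ e ∈ range n, c1 e with hu1
      set E1 := ∑ e ∈ range n, e * c1 e with hE1
      clear_value u1 E1
      -- main case distinction
      by_cases hmain : u1 - d = 1 ∧ m₁ + E1 = r - 1
      · obtain ⟨hmain1, hmain2⟩ := hmain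
        have hu1v : u1 = d + 1 := by omega
        -- x = M + m_r
        have b1 : u1 * m₁ = d * m₁ + m₁ := by rw [hu1v]; ring
        have b3 : d * (r - 1) = d * m₁ + d * E1 := by
          rw [show r - 1 = m₁ + E1 from hmain2.symm]; ring
        have b4 : (r - 1) * d = d * (r - 1) := mul_comm _ _
        have hxv : x = (m₁ + (r - 1) * d) + (m₁ + (n - 1) * d) := by omega
        have b5 : (u1 + 1) * (m₁ + (n - 1) * d)
            = d * (m₁ + (n - 1) * d) + 2 * (m₁ + (n - 1) * d) := by rw [hu1v]; ring
        have hyv : y = ((m₁ + (n - 1) * d) - (m₁ + (r - 1) * d)) + d * (m₁ + (n - 1) * d) := by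
          omega
        simp [Prod.ext_iff, hxv, hyv]
      · exfalso
        apply h4
        obtain ⟨c, hcr, hcs, hcw⟩ := ach_exists n r (u1 - d) (m₁ + E1) hn hr₁ hrn2
          (by omega) hbound
          (by rintro ⟨hE, hro | hu⟩; · omega
              · exact hmain ⟨hu, hE⟩)
        apply mem_of_rep n m₁ d r hr₁ hrn1 hn _ c (d - 1) hcr
        · show x - (m₁ + (n - 1) * d)
            = (∑ e ∈ range n, c e) * m₁ + d * ∑ e ∈ range n, e * c e
          rw [hcs, hcw]
          have b6 : (u1 - d + d) * m₁ = (u1 - d) * m₁ + d * m₁ := add_mul _ _ _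
          rw [show u1 - d + d = u1 from by omega] at b6
          have b7 : d * (m₁ + E1) = d * m₁ + d * E1 := by ring
          omega
        · show x - (m₁ + (n - 1) * d) + (y - (m₁ + (n - 1) * d))
            = ((∑ e ∈ range n, c e) + (d - 1)) * (m₁ + (n - 1) * d)
          rw [hcs]
          have b8 : (u1 + 1) * (m₁ + (n - 1) * d)
              = ((u1 - d) + (d - 1)) * (m₁ + (n - 1) * d) + 2 * (m₁ + (n - 1) * d) := by
            rw [show u1 + 1 = ((u1 - d) + (d - 1)) + 2 from by omega, add_mul]
          omega
    · rintro hs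
      rw [Prod.mk.injEq] at hs
      obtain ⟨hx0, hy0⟩ := hs
      subst hx0
      subst hy0
      have hcval : ∀ e : ℕ, ((if e = r then 1 else 0) + (if e = n - 2 then 1 else 0)
          + (if e = 0 then 0 else 0) + (if e = 0 then 0 else 0) : ℕ) = (if e = r then 1 else 0) + (if e = n - 2 then 1 else 0) := by
        intro e; simp
      -- membership of s itself
      have hqs := quad_sum n r (n - 2) 0 0 1 1 0 0 (by omega) (by omega) (by omega) (by omega)
      have hmem1 : ((m₁ + (r - 1) * d) + (m₁ + (n - 1) * d),
          ((m₁ + (n - 1) * d) - (m₁ + (r - 1) * d)) + d * (m₁ + (n - 1) * d))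
          ∈ PF n m₁ d r := by
        apply mem_of_rep n m₁ d r hr₁ hrn1 hn _
          (fun e => (if e = r then 1 else 0) + (if e = n - 2 then 1 else 0)
            + (if e = 0 then 0 else 0) + (if e = 0 then 0 else 0)) d
          (by have h1 : r - 1 ≠ r := by omega
              have h2 : r - 1 ≠ n - 2 := by omega
              have h3 : r - 1 ≠ 0 := by omega
              simp [h1, h2, h3])
        · show (m₁ + (r - 1) * d) + (m₁ + (n - 1) * d) = _
          rw [hqs.1, hqs.2]
          have b1 : d * (r * 1 + (n - 2) * 1 + 0 * 0 + 0 * 0) = (r - 1) * d + (n - 1) * d := by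
            rw [show r * 1 + (n - 2) * 1 + 0 * 0 + 0 * 0 = (r - 1) + (n - 1) from by omega,
              mul_add]
            ring
          omega
        · show _ = _
          rw [hqs.1]
          have b2 : (1 + 1 + 0 + 0 + d) * (m₁ + (n - 1) * d)
              = 2 * (m₁ + (n - 1) * d) + d * (m₁ + (n - 1) * d) := by ring
          omega
      refine ⟨hmem1, ?_, ?_, ?_⟩
      · -- s - a_n
        refine ⟨(m₁ + (r - 1) * d,
          ((m₁ + (n - 1) * d) - (m₁ + (r - 1) * d)) + d * (m₁ + (n - 1) * d)), ?_, ?_⟩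
        · -- membership : d•a_1 + a_(r - m₁)
          have hqs2 := quad_sum n 0 (r - m₁ - 1) 0 0 d 1 0 0 (by omega) (by omega)
            (by omega) (by omega)
          apply mem_of_rep n m₁ d r hr₁ hrn1 hn _
            (fun e => (if e = 0 then d else 0) + (if e = r - m₁ - 1 then 1 else 0)
              + (if e = 0 then 0 else 0) + (if e = 0 then 0 else 0)) 0
            (by have h1 : r - 1 ≠ 0 := by omega
                have h2 : r - 1 ≠ r - m₁ - 1 := by omega
                simp [h1, h2])
          · show m₁ + (r - 1) * d = _
            rw [hqs2.1, hqs2.2]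
            have b1 : d * (0 * d + (r - m₁ - 1) * 1 + 0 * 0 + 0 * 0) = d * (r - m₁ - 1) := by
              rw [show 0 * d + (r - m₁ - 1) * 1 + 0 * 0 + 0 * 0 = r - m₁ - 1 from by omega]
            have b2 : d * (r - 1) = d * m₁ + d * (r - m₁ - 1) := by
              rw [show r - 1 = m₁ + (r - m₁ - 1) from by omega, mul_add]
            have b3 : (r - 1) * d = d * (r - 1) := mul_comm _ _
            have b4 : (d + 1 + 0 + 0) * m₁ = d * m₁ + m₁ := by ring
            omega
          · show _ = _
            rw [hqs2.1]
            have b5 : (d + 1 + 0 + 0 + 0) * (m₁ + (n - 1) * d)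
                = d * (m₁ + (n - 1) * d) + (m₁ + (n - 1) * d) := by ring
            omega
        · simp only [Prod.mk.injEq]; constructor <;> (push_cast; omega)
      · -- s - a_{n+1}
        refine ⟨((m₁ + (r - 1) * d) + (m₁ + (n - 1) * d),
          (((m₁ + (n - 1) * d) - (m₁ + (r - 1) * d)) + d * (m₁ + (n - 1) * d))
            - (m₁ + (n - 1) * d)), ?_, ?_⟩
        · apply mem_of_rep n m₁ d r hr₁ hrn1 hn _
            (fun e => (if e = r then 1 else 0) + (if e = n - 2 then 1 else 0)
              + (if e = 0 then 0 else 0) + (if e = 0 then 0 else 0)) (d - 1)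
            (by have h1 : r - 1 ≠ r := by omega
                have h2 : r - 1 ≠ n - 2 := by omega
                have h3 : r - 1 ≠ 0 := by omega
                simp [h1, h2, h3])
          · show (m₁ + (r - 1) * d) + (m₁ + (n - 1) * d) = _
            rw [hqs.1, hqs.2]
            have b1 : d * (r * 1 + (n - 2) * 1 + 0 * 0 + 0 * 0) = (r - 1) * d + (n - 1) * d := by
              rw [show r * 1 + (n - 2) * 1 + 0 * 0 + 0 * 0 = (r - 1) + (n - 1) from by omega,
                mul_add]
              ring
            omega
          · show _ = _
            rw [hqs.1]
            have b2 : (1 + 1 + 0 + 0 + (d - 1)) * (m₁ + (n - 1) * d)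
                = 2 * (m₁ + (n - 1) * d) + (d - 1) * (m₁ + (n - 1) * d) := by ring
            have b3 : (d - 1 + 1) * (m₁ + (n - 1) * d)
                = (d - 1) * (m₁ + (n - 1) * d) + 1 * (m₁ + (n - 1) * d) := add_mul _ _ _
            rw [show d - 1 + 1 = d from by omega, one_mul] at b3
            omega
        · simp only [Prod.mk.injEq]; constructor <;> omega
      · -- non-membership
        rintro ⟨t, htP, hteq⟩
        simp only [Prod.mk.injEq] at hteq
        obtain ⟨ht1, ht2⟩ := hteq
        have htv : t = (m₁ + (r - 1) * d,
            (((m₁ + (n - 1) * d) - (m₁ + (r - 1) * d)) + d * (m₁ + (n - 1) * d))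
              - (m₁ + (n - 1) * d)) := Prod.ext (by omega) (by omega)
        rw [htv] at htP
        obtain ⟨c, v, hc, hh1, hh2⟩ := memP_char n m₁ d r hn hr₁ htP
        dsimp only at hh1 hh2
        have hcase0 : (∑ e ∈ range n, c e) = 0 → (∑ e ∈ range n, e * c e) = 0 :=
          fun h => E_zero n c h
        have hsr : (∑ e ∈ range n, c e) = 1 → (∑ e ∈ range n, e * c e) ≠ r - 1 :=
          fun h => single_rep n r hr₁ c hc h
        have hEub : (∑ e ∈ range n, e * c e) ≤ (∑ e ∈ range n, c e) * (n - 1) := E_le n c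
        generalize hu : (∑ e ∈ range n, c e) = u at hh1 hh2 hcase0 hsr hEub
        generalize hE : (∑ e ∈ range n, e * c e) = E at hh1 hh2 hcase0 hsr hEub
        -- total count = d
        have huv : u + v = d := by
          apply Nat.eq_of_mul_eq_mul_right hMpos
          omega
        -- now analyze
        rcases Nat.lt_or_ge u 2 with hu2 | hu2
        · interval_cases u
          · have hE0 := hcase0 rfl
            subst hE0
            omega
          · -- u = 1 : E = r - 1 forced, contradiction with single_rep
            have hE1 : d * E = d * (r - 1) := by
              have b1 : (r - 1) * d = d * (r - 1) := mul_comm _ _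
              omega
            have : E = r - 1 := Nat.eq_of_mul_eq_mul_left hd hE1
            exact hsr rfl this
        · -- u ≥ 2 : derive d ∣ (u-1) hence u > d, contradiction
          have b1 : (u - 1 + 1) * m₁ = (u - 1) * m₁ + 1 * m₁ := add_mul _ _ _
          rw [show u - 1 + 1 = u from by omega, one_mul] at b1
          have b2 : (r - 1) * d = d * (r - 1) := mul_comm _ _
          -- (u-1)*m₁ + d*E = d*(r-1)
          have hkey : (u - 1) * m₁ + d * E = d * (r - 1) := by omega
          have hEle : E ≤ r - 1 := by
            refine Nat.le_of_mul_le_mul_left ?_ hd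
            omega
          have hk : d * (E + ((r - 1) - E)) = d * E + d * ((r - 1) - E) := mul_add _ _ _
          rw [show E + ((r - 1) - E) = r - 1 from by omega] at hk
          have hwm : (u - 1) * m₁ = d * ((r - 1) - E) := by omega
          have hdvd : d ∣ u - 1 := by
            have hcop : Nat.Coprime d m₁ := Nat.coprime_comm.mp hgcd
            exact hcop.dvd_of_dvd_mul_right ⟨(r - 1) - E, hwm⟩
          have : d ≤ u - 1 := Nat.le_of_dvd (by omega) hdvd
          omega
end
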